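/- arXiv:1009.1866 — 4 statements merged into one kernel-verified Lean document; each statement's English description precedes it below -/
import Mathlib

section
/- Let P be a convex polygon and let α be the smallest interior angle of P. Then the aspect ratio of P is at least 2/α. -/
open MeasureTheory Real

/-- The aspect ratio of a planar convex region: `diam(A)^2 / area(A)`. -/
noncomputable def aspectRatio (A : Set (EuclideanSpace ℝ (Fin 2))) : ℝ :=
  (Metric.diam A) ^ 2 / (volume A).toReal

section Aux
open Set

lemma sector_vol {θ d : ℝ} (hθ0 : 0 < θ) (hθπ : θ < π) (hd : 0 ≤ d) :
    volume {z : ℂ | 0 ≤ z.im ∧ z.im * Real.cos θ ≤ z.re * Real.sin θ ∧ ‖z‖ ≤ d}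
      ≤ ENNReal.ofReal (θ * d ^ 2 / 2) := by
  set S := {z : ℂ | 0 ≤ z.im ∧ z.im * Real.cos θ ≤ z.re * Real.sin θ ∧ ‖z‖ ≤ d}
    with hSdef
  have hclosed : IsClosed S := by
    have h1 : IsClosed {z : ℂ | 0 ≤ z.im} := isClosed_le continuous_const Complex.continuous_im
    have h2 : IsClosed {z : ℂ | z.im * Real.cos θ ≤ z.re * Real.sin θ} :=
      isClosed_le (Complex.continuous_im.mul continuous_const)
        (Complex.continuous_re.mul continuous_const)
    have h3 : IsClosed {z : ℂ | ‖z‖ ≤ d} :=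
      isClosed_le continuous_norm continuous_const
    exact h1.inter (h2.inter h3)
  have hfin : volume S ≠ ⊤ := by
    have hb : Bornology.IsBounded S := by
      apply (Metric.isBounded_closedBall (x := (0:ℂ)) (r := d)).subset
      intro z hz
      simpa [Metric.mem_closedBall, Complex.dist_eq] using hz.2.2
    exact hb.measure_lt_top.ne
  set T : Set (ℝ × ℝ) := Ioc 0 d ×ˢ Icc 0 θ with hTdef
  have hTsub : T ⊆ polarCoord.target := by
    rw [polarCoord_target]
    apply prod_mono
    · exact Ioc_subset_Ioi_self
    · intro x hx
      exact ⟨lt_of_lt_of_le (by linarith [pi_pos]) hx.1, lt_of_le_of_lt hx.2 hθπ⟩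
  have key : EqOn (fun p : ℝ × ℝ => p.1 • S.indicator (1 : ℂ → ℝ) (Complex.polarCoord.symm p))
      (fun p : ℝ × ℝ => T.indicator (fun q : ℝ × ℝ => q.1) p) polarCoord.target := by
    rintro ⟨r, φ⟩ hp
    rw [polarCoord_target] at hp
    obtain ⟨hr, hφ⟩ := hp
    simp only [mem_Ioi] at hr
    simp only [mem_Ioo] at hφ
    have hre : (Complex.polarCoord.symm (r, φ)).re = r * Real.cos φ := by
      simp [Complex.polarCoord_symm_apply, Complex.cos_ofReal_re, Complex.sin_ofReal_re]
    have him : (Complex.polarCoord.symm (r, φ)).im = r * Real.sin φ := by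
      simp [Complex.polarCoord_symm_apply, Complex.cos_ofReal_re, Complex.sin_ofReal_re]
    have habs : ‖Complex.polarCoord.symm (r, φ)‖ = r := by
      rw [Complex.norm_polarCoord_symm, abs_of_pos hr]
    have hiff : Complex.polarCoord.symm (r, φ) ∈ S ↔ (r, φ) ∈ T := by
      rw [hSdef, hTdef]
      simp only [mem_setOf_eq, hre, him, habs, mem_prod, mem_Ioc, mem_Icc]
      constructor
      · rintro ⟨h1, h2, h3⟩
        have hsφ : 0 ≤ Real.sin φ := nonneg_of_mul_nonneg_right h1 hr
        have hφ0 : 0 ≤ φ := by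
          by_contra hc
          push_neg at hc
          exact absurd hsφ (not_le.mpr (Real.sin_neg_of_neg_of_neg_pi_lt hc hφ.1))
        have hφθ : φ ≤ θ := by
          by_contra hc
          push_neg at hc
          have hpos : 0 < Real.sin (φ - θ) :=
            Real.sin_pos_of_pos_of_lt_pi (by linarith) (by linarith)
          rw [Real.sin_sub] at hpos
          nlinarith
        exact ⟨⟨hr, h3⟩, hφ0, hφθ⟩
      · rintro ⟨⟨hr0, hrd⟩, hφ0, hφθ⟩
        refine ⟨mul_nonneg hr.le (Real.sin_nonneg_of_nonneg_of_le_pi hφ0 (by linarith)), ?_, hrd⟩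
        have hneg : Real.sin (φ - θ) ≤ 0 := by
          have : 0 ≤ Real.sin (θ - φ) :=
            Real.sin_nonneg_of_nonneg_of_le_pi (by linarith) (by linarith)
          rw [show φ - θ = -(θ - φ) by ring, Real.sin_neg]
          linarith
        rw [Real.sin_sub] at hneg
        nlinarith
    dsimp only
    by_cases h : Complex.polarCoord.symm (r, φ) ∈ S
    · rw [Set.indicator_of_mem h, Set.indicator_of_mem (hiff.mp h)]
      simp
    · rw [Set.indicator_of_notMem h, Set.indicator_of_notMem (fun hc => h (hiff.mpr hc))]
      simp
  have hvol : (volume S).toReal = d ^ 2 / 2 * θ := by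
    rw [← measureReal_def, ← integral_indicator_one hclosed.measurableSet,
      ← Complex.integral_comp_polarCoord_symm (S.indicator (1 : ℂ → ℝ)),
      setIntegral_congr_fun polarCoord.open_target.measurableSet key,
      setIntegral_indicator (measurableSet_Ioc.prod measurableSet_Icc),
      Set.inter_eq_self_of_subset_right hTsub]
    have : ∫ p in T, p.1 = ∫ p in T, (fun r : ℝ => r) p.1 * (fun _ : ℝ => (1:ℝ)) p.2 := by
      simp
    rw [this, hTdef, Measure.volume_eq_prod, ← Measure.prod_restrict,
      integral_prod_mul (fun r : ℝ => r) (fun _ : ℝ => (1:ℝ))]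
    rw [← intervalIntegral.integral_of_le hd, integral_id]
    simp [Real.volume_Icc, ENNReal.toReal_ofReal hθ0.le, hθ0.le]
  calc volume S = ENNReal.ofReal ((volume S).toReal) := (ENNReal.ofReal_toReal hfin).symm
    _ ≤ ENNReal.ofReal (θ * d ^ 2 / 2) := by
        apply ENNReal.ofReal_le_ofReal
        rw [hvol]; ring_nf; exact le_refl _


lemma angle_map_lie {E F : Type*} [NormedAddCommGroup E] [InnerProductSpace ℝ E]
    [NormedAddCommGroup F] [InnerProductSpace ℝ F] (e : E ≃ₗᵢ[ℝ] F) (x y : E) :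
    InnerProductGeometry.angle (e x) (e y) = InnerProductGeometry.angle x y := by
  unfold InnerProductGeometry.angle
  rw [LinearIsometryEquiv.inner_map_map, e.norm_map, e.norm_map]

lemma cone_vol_complex (L₁ L₂ : ℂ →L[ℝ] ℝ) (u₁ u₂ : ℂ) (hu₁ : u₁ ≠ 0) (hu₂ : u₂ ≠ 0)
    {θ : ℝ} (hθ : θ = InnerProductGeometry.angle u₁ u₂) (hθ0 : 0 < θ) (hθπ : θ < π)
    (h11 : L₁ u₁ = 0) (h12 : L₁ u₂ < 0) (h22 : L₂ u₂ = 0) (h21 : L₂ u₁ < 0)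
    {d : ℝ} (hd : 0 ≤ d) :
    volume {z : ℂ | L₁ z ≤ 0 ∧ L₂ z ≤ 0 ∧ ‖z‖ ≤ d}
      ≤ ENNReal.ofReal (θ * d ^ 2 / 2) := by
  have hn1 : (0:ℝ) < ‖u₁‖ := norm_pos_iff.mpr hu₁
  have hn2 : (0:ℝ) < ‖u₂‖ := norm_pos_iff.mpr hu₂
  have hsinθ : 0 < Real.sin θ := Real.sin_pos_of_pos_of_lt_pi hθ0 hθπ
  -- rotation sending u₁ to the positive real axis
  have hcmem : (starRingEnd ℂ) u₁ / (‖u₁‖ : ℂ) ∈ Metric.sphere (0:ℂ) 1 := by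
    rw [mem_sphere_zero_iff_norm]
    simp only [norm_div, Complex.norm_conj, Complex.norm_real, Real.norm_eq_abs,
      abs_of_pos hn1, _root_.abs_of_nonneg (norm_nonneg u₁)]
    exact div_self hn1.ne'
  set c : Circle := ⟨(starRingEnd ℂ) u₁ / (‖u₁‖ : ℂ), hcmem⟩ with hc
  have he₀1 : rotation c u₁ = (‖u₁‖ : ℂ) := by
    rw [rotation_apply]
    show (starRingEnd ℂ) u₁ / (‖u₁‖ : ℂ) * u₁ = _
    rw [div_mul_eq_mul_div, Complex.conj_mul', sq]
    rw [mul_div_assoc, div_self (by exact_mod_cast hn1.ne' : (‖u₁‖:ℂ) ≠ 0), mul_one]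
  -- choose e with e u₁ positive real and (e u₂).im ≥ 0
  obtain ⟨e, he1, heim⟩ : ∃ e : ℂ ≃ₗᵢ[ℝ] ℂ, e u₁ = (‖u₁‖ : ℂ) ∧ 0 ≤ (e u₂).im := by
    by_cases h : 0 ≤ (rotation c u₂).im
    · exact ⟨rotation c, he₀1, h⟩
    · refine ⟨(rotation c).trans Complex.conjLIE, ?_, ?_⟩
      · simp [he₀1, Complex.conjLIE_apply, Complex.conj_ofReal]
      · simp only [LinearIsometryEquiv.trans_apply, Complex.conjLIE_apply, Complex.conj_im]
        linarith [not_le.mp h]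
  -- coordinates of e u₂
  have hinner : (inner ℝ u₁ u₂ : ℝ) = ‖u₁‖ * ‖u₂‖ * Real.cos θ := by
    rw [hθ, InnerProductGeometry.cos_angle]
    have hC : ‖u₁‖ * ‖u₂‖ ≠ 0 := (mul_pos hn1 hn2).ne'
    rw [← mul_div_assoc, mul_div_cancel_left₀ _ hC]
  have hre2 : (e u₂).re = ‖u₂‖ * Real.cos θ := by
    have h1 : (inner ℝ (e u₁) (e u₂) : ℝ) = ‖u₁‖ * (e u₂).re := by
      rw [Complex.inner, he1, Complex.conj_ofReal, Complex.re_mul_ofReal, mul_comm]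
    rw [LinearIsometryEquiv.inner_map_map] at h1
    have h2 : ‖u₁‖ * (e u₂).re = ‖u₁‖ * (‖u₂‖ * Real.cos θ) := by
      rw [← h1, hinner]; ring
    exact mul_left_cancel₀ hn1.ne' h2
  have him2 : (e u₂).im = ‖u₂‖ * Real.sin θ := by
    have hsq : (e u₂).re ^ 2 + (e u₂).im ^ 2 = ‖u₂‖ ^ 2 := by
      have hnorm : ‖e u₂‖ = ‖u₂‖ := e.norm_map u₂
      rw [← hnorm, Complex.sq_norm, Complex.normSq_apply]
      ring
    have hsc : Real.sin θ ^ 2 + Real.cos θ ^ 2 = 1 := Real.sin_sq_add_cos_sq θ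
    rw [hre2] at hsq
    have hfac : ((e u₂).im - ‖u₂‖ * Real.sin θ) * ((e u₂).im + ‖u₂‖ * Real.sin θ) = 0 := by
      linear_combination hsq - ‖u₂‖ ^ 2 * hsc
    rcases mul_eq_zero.mp hfac with h | h
    · linarith
    · have hpos : 0 ≤ ‖u₂‖ * Real.sin θ := mul_nonneg hn2.le hsinθ.le
      have h1 : (e u₂).im = -(‖u₂‖ * Real.sin θ) := by linarith
      linarith
  -- transfer the set
  set K := {z : ℂ | L₁ z ≤ 0 ∧ L₂ z ≤ 0 ∧ ‖z‖ ≤ d} with hK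
  have hKmeas : MeasurableSet K := by
    have h1 : IsClosed {z : ℂ | L₁ z ≤ 0} := isClosed_le L₁.continuous continuous_const
    have h2 : IsClosed {z : ℂ | L₂ z ≤ 0} := isClosed_le L₂.continuous continuous_const
    have h3 : IsClosed {z : ℂ | ‖z‖ ≤ d} :=
      isClosed_le continuous_norm continuous_const
    exact (h1.inter (h2.inter h3)).measurableSet
  have htrans : volume (e.symm ⁻¹' K) = volume K :=
    e.symm.measurePreserving.measure_preimage hKmeas.nullMeasurableSet
  -- the transferred set is inside the sector
  have hzdecomp : ∀ z : ℂ, z = z.re • (1:ℂ) + z.im • Complex.I := by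
    intro z
    simp only [Complex.real_smul, mul_one]
    exact (Complex.re_add_im z).symm
  have hexp : ∀ (L : ℂ →L[ℝ] ℝ) (z : ℂ),
      L (e.symm z) = z.re * L (e.symm 1) + z.im * L (e.symm Complex.I) := by
    intro L z
    conv_lhs => rw [hzdecomp z]
    rw [map_add, LinearIsometryEquiv.map_smul, LinearIsometryEquiv.map_smul, map_add,
      ContinuousLinearMap.map_smul, ContinuousLinearMap.map_smul]
    simp
  have hse : ∀ u : ℂ, e.symm (e u) = u := fun u => e.symm_apply_apply u
  set a₁ := L₁ (e.symm 1) with ha₁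
  set b₁ := L₁ (e.symm Complex.I) with hb₁
  set a₂ := L₂ (e.symm 1) with ha₂
  set b₂ := L₂ (e.symm Complex.I) with hb₂
  have heu1 : L₁ u₁ = ‖u₁‖ * a₁ := by
    have := hexp L₁ (e u₁)
    rw [hse, he1] at this
    simpa using this
  have heu2 : L₁ u₂ = ‖u₂‖ * Real.cos θ * a₁ + ‖u₂‖ * Real.sin θ * b₁ := by
    have := hexp L₁ (e u₂)
    rw [hse, hre2, him2] at this
    linarith [this]
  have heu3 : L₂ u₁ = ‖u₁‖ * a₂ := by
    have := hexp L₂ (e u₁)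
    rw [hse, he1] at this
    simpa using this
  have heu4 : L₂ u₂ = ‖u₂‖ * Real.cos θ * a₂ + ‖u₂‖ * Real.sin θ * b₂ := by
    have := hexp L₂ (e u₂)
    rw [hse, hre2, him2] at this
    linarith [this]
  have ha₁0 : a₁ = 0 := by
    rw [h11] at heu1
    rcases mul_eq_zero.mp heu1.symm with h | h
    · exact absurd h hn1.ne'
    · exact h
  have hb₁neg : b₁ < 0 := by
    rw [ha₁0] at heu2
    by_contra hcon
    push_neg at hcon
    have : 0 ≤ ‖u₂‖ * Real.sin θ * b₁ := mul_nonneg (mul_nonneg hn2.le hsinθ.le) hcon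
    nlinarith [h12, heu2]
  have ha₂neg : a₂ < 0 := by
    by_contra hcon
    push_neg at hcon
    have : 0 ≤ ‖u₁‖ * a₂ := mul_nonneg hn1.le hcon
    linarith [h21, heu3.symm.trans_lt h21]
  have hrel : Real.cos θ * a₂ + Real.sin θ * b₂ = 0 := by
    rw [h22] at heu4
    have h2 : ‖u₂‖ * (Real.cos θ * a₂ + Real.sin θ * b₂) = 0 := by linarith [heu4]
    rcases mul_eq_zero.mp h2 with h | h
    · exact absurd h hn2.ne'
    · exact h
  have hsub : (e.symm ⁻¹' K) ⊆
      {z : ℂ | 0 ≤ z.im ∧ z.im * Real.cos θ ≤ z.re * Real.sin θ ∧ ‖z‖ ≤ d} := by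
    rintro z ⟨hz1, hz2, hz3⟩
    have hL₁z : z.re * a₁ + z.im * b₁ ≤ 0 := by rw [← hexp L₁ z]; exact hz1
    have hL₂z : z.re * a₂ + z.im * b₂ ≤ 0 := by rw [← hexp L₂ z]; exact hz2
    have habs : ‖z‖ ≤ d := by
      have hn : ‖e.symm z‖ = ‖z‖ := e.symm.norm_map z
      rw [← hn]
      exact hz3
    have hzim : 0 ≤ z.im := by
      rw [ha₁0] at hL₁z
      by_contra hcon
      push_neg at hcon
      have : 0 < z.im * b₁ := mul_pos_of_neg_of_neg hcon hb₁neg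
      nlinarith [hL₁z]
    refine ⟨hzim, ?_, habs⟩
    have h5 : Real.sin θ * (z.re * a₂ + z.im * b₂) ≤ 0 :=
      mul_nonpos_of_nonneg_of_nonpos hsinθ.le hL₂z
    have h7 : a₂ * (z.re * Real.sin θ - z.im * Real.cos θ) ≤ 0 := by
      have heq : a₂ * (z.re * Real.sin θ - z.im * Real.cos θ) =
          Real.sin θ * (z.re * a₂ + z.im * b₂) -
            z.im * (Real.cos θ * a₂ + Real.sin θ * b₂) := by ring
      rw [heq, hrel, mul_zero, sub_zero]
      exact h5
    by_contra hcon
    push_neg at hcon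
    have : 0 < a₂ * (z.re * Real.sin θ - z.im * Real.cos θ) :=
      mul_pos_of_neg_of_neg ha₂neg (by linarith)
    linarith
  calc volume K = volume (e.symm ⁻¹' K) := htrans.symm
    _ ≤ volume {z : ℂ | 0 ≤ z.im ∧ z.im * Real.cos θ ≤ z.re * Real.sin θ ∧ ‖z‖ ≤ d} :=
        measure_mono hsub
    _ ≤ ENNReal.ofReal (θ * d ^ 2 / 2) := sector_vol hθ0 hθπ hd


lemma cone_vol (L₁ L₂ : EuclideanSpace ℝ (Fin 2) →L[ℝ] ℝ) (u₁ u₂ : EuclideanSpace ℝ (Fin 2))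
    (hu₁ : u₁ ≠ 0) (hu₂ : u₂ ≠ 0)
    {θ : ℝ} (hθ : θ = InnerProductGeometry.angle u₁ u₂) (hθ0 : 0 < θ) (hθπ : θ < π)
    (h11 : L₁ u₁ = 0) (h12 : L₁ u₂ < 0) (h22 : L₂ u₂ = 0) (h21 : L₂ u₁ < 0)
    {d : ℝ} (hd : 0 ≤ d) :
    volume {x : EuclideanSpace ℝ (Fin 2) | L₁ x ≤ 0 ∧ L₂ x ≤ 0 ∧ ‖x‖ ≤ d}
      ≤ ENNReal.ofReal (θ * d ^ 2 / 2) := by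
  set h : ℂ ≃ₗᵢ[ℝ] EuclideanSpace ℝ (Fin 2) := Complex.orthonormalBasisOneI.repr with hh
  set M₁ : ℂ →L[ℝ] ℝ := L₁.comp (h.toContinuousLinearEquiv : ℂ ≃L[ℝ] EuclideanSpace ℝ (Fin 2)).toContinuousLinearMap with hM₁
  set M₂ : ℂ →L[ℝ] ℝ := L₂.comp (h.toContinuousLinearEquiv : ℂ ≃L[ℝ] EuclideanSpace ℝ (Fin 2)).toContinuousLinearMap with hM₂
  have hM₁a : ∀ z : ℂ, M₁ z = L₁ (h z) := fun z => rfl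
  have hM₂a : ∀ z : ℂ, M₂ z = L₂ (h z) := fun z => rfl
  set w₁ : ℂ := h.symm u₁ with hw₁
  set w₂ : ℂ := h.symm u₂ with hw₂
  have hhw₁ : h w₁ = u₁ := h.apply_symm_apply u₁
  have hhw₂ : h w₂ = u₂ := h.apply_symm_apply u₂
  have hwne₁ : w₁ ≠ 0 := fun hc => hu₁ (by rw [← hhw₁, hc, map_zero])
  have hwne₂ : w₂ ≠ 0 := fun hc => hu₂ (by rw [← hhw₂, hc, map_zero])
  have hangle : θ = InnerProductGeometry.angle w₁ w₂ := by
    rw [hθ, ← hhw₁, ← hhw₂, angle_map_lie]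
  have hset : {x : EuclideanSpace ℝ (Fin 2) | L₁ x ≤ 0 ∧ L₂ x ≤ 0 ∧ ‖x‖ ≤ d}
      = h.symm ⁻¹' {z : ℂ | M₁ z ≤ 0 ∧ M₂ z ≤ 0 ∧ ‖z‖ ≤ d} := by
    ext x
    simp only [mem_preimage, mem_setOf_eq, hM₁a, hM₂a, h.apply_symm_apply,
      h.symm.norm_map]
  have hmeas : MeasurableSet {z : ℂ | M₁ z ≤ 0 ∧ M₂ z ≤ 0 ∧ ‖z‖ ≤ d} := by
    have h1 : IsClosed {z : ℂ | M₁ z ≤ 0} := isClosed_le M₁.continuous continuous_const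
    have h2 : IsClosed {z : ℂ | M₂ z ≤ 0} := isClosed_le M₂.continuous continuous_const
    have h3 : IsClosed {z : ℂ | ‖z‖ ≤ d} :=
      isClosed_le continuous_norm continuous_const
    exact (h1.inter (h2.inter h3)).measurableSet
  rw [hset, h.symm.measurePreserving.measure_preimage hmeas.nullMeasurableSet]
  exact cone_vol_complex M₁ M₂ w₁ w₂ hwne₁ hwne₂ hangle hθ0 hθπ
    (by rw [hM₁a, hhw₁]; exact h11) (by rw [hM₁a, hhw₂]; exact h12)
    (by rw [hM₂a, hhw₂]; exact h22) (by rw [hM₂a, hhw₁]; exact h21) hd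

end Aux

section Main
open Set

lemma support_line {P : Set (EuclideanSpace ℝ (Fin 2))} (hconv : Convex ℝ P)
    {x y w₀ : EuclideanSpace ℝ (Fin 2)} (hx : x ∈ P) (hy : y ∈ P)
    (hm : midpoint ℝ x y ∉ interior P) (hw₀ : w₀ ∈ interior P) :
    ∃ f : EuclideanSpace ℝ (Fin 2) →L[ℝ] ℝ,
      (∀ p ∈ P, f p ≤ f x) ∧ f y = f x ∧ f w₀ < f x := by
  obtain ⟨f, hf⟩ := geometric_hahn_banach_open_point hconv.interior isOpen_interior hm
  have hPle : ∀ p ∈ P, f p ≤ f (midpoint ℝ x y) := by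
    intro p hp
    have hcont : Continuous fun t : ℝ => f ((1 - t) • p + t • w₀) := by
      apply f.continuous.comp
      exact ((continuous_const.sub continuous_id).smul continuous_const).add
        (continuous_id.smul continuous_const)
    have h0 : Filter.Tendsto (fun t : ℝ => f ((1 - t) • p + t • w₀)) (nhds 0)
        (nhds (f p)) := by
      have := hcont.tendsto 0
      simpa using this
    have h0' : Filter.Tendsto (fun t : ℝ => f ((1 - t) • p + t • w₀))
        (nhdsWithin (0:ℝ) (Set.Ioi 0)) (nhds (f p)) := h0.mono_left nhdsWithin_le_nhds
    refine le_of_tendsto h0' ?_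
    filter_upwards [Ioo_mem_nhdsGT one_pos] with t ht
    exact (hf _ (hconv.combo_closure_interior_mem_interior (subset_closure hp) hw₀
      (by linarith [ht.2]) ht.1 (by ring))).le
  have hmid : f (midpoint ℝ x y) = (f x + f y) / 2 := by
    rw [midpoint_eq_smul_add, ContinuousLinearMap.map_smul, map_add, smul_eq_mul, invOf_eq_inv]
    ring
  have h1 : f x ≤ f (midpoint ℝ x y) := hPle x hx
  have h2 : f y ≤ f (midpoint ℝ x y) := hPle y hy
  have hxeq : f x = f (midpoint ℝ x y) := by linarith
  exact ⟨f, fun p hp => (hPle p hp).trans hxeq.symm.le, by linarith,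
    (hf w₀ hw₀).trans_le hxeq.symm.le⟩

/-- Let `P` be a convex polygon with vertices `v 0, …, v (n-1)` (listed in cyclic boundary
order, each a genuine vertex), `n ≥ 3`, and let `α` be the smallest interior angle of `P`.
Then the aspect ratio of `P` is at least `2/α`. -/
theorem stmt0 (n : ℕ) [NeZero n] (hn : 3 ≤ n)
    (v : Fin n → EuclideanSpace ℝ (Fin 2)) (hinj : Function.Injective v)
    (P : Set (EuclideanSpace ℝ (Fin 2)))
    (hP : P = convexHull ℝ (Set.range v))
    (hvert : ∀ i, v i ∉ convexHull ℝ (v '' {j | j ≠ i}))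
    (hcyc : ∀ i, segment ℝ (v i) (v (i + 1)) ⊆ frontier P)
    (α : ℝ)
    (hα : α = ⨅ i : Fin n, EuclideanGeometry.angle (v (i - 1)) (v i) (v (i + 1))) :
    2 / α ≤ aspectRatio P := by
  have haspect_nonneg : 0 ≤ aspectRatio P :=
    div_nonneg (sq_nonneg _) ENNReal.toReal_nonneg
  rcases le_or_gt α 0 with hα0 | hα0
  · exact (div_nonpos_iff.mpr (Or.inl ⟨by norm_num, hα0⟩)).trans haspect_nonneg
  -- basic facts
  have hsub : ∀ i, v i ∈ P := fun i => hP ▸ subset_convexHull ℝ _ (mem_range_self i)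
  have hconv : Convex ℝ P := hP ▸ convex_convexHull ℝ _
  have hcomp : IsCompact P := hP ▸ (Set.finite_range v).isCompact_convexHull ℝ
  have hbd : Bornology.IsBounded P := hcomp.isBounded
  -- Fin index facts
  have hone : (1 : Fin n) ≠ 0 := by
    intro hcon
    rw [Fin.one_eq_zero_iff] at hcon
    omega
  have hadd : ∀ i : Fin n, i + 1 ≠ i := by
    intro i h
    apply hone
    have : i + 1 = i + 0 := by rw [add_zero]; exact h
    exact add_left_cancel this
  have hsubne : ∀ i : Fin n, i - 1 ≠ i := by
    intro i h
    apply hadd i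
    rw [sub_eq_iff_eq_add] at h
    exact h.symm
  have hsubadd : ∀ i : Fin n, i - 1 + 1 = i := fun i => sub_add_cancel i 1
  -- noncollinearity
  have hncol : ¬ Collinear ℝ (Set.range v) := by
    intro hc
    obtain ⟨dir, hdir⟩ := (collinear_iff_of_mem (mem_range_self (0 : Fin n))).mp hc
    choose t ht using fun i => hdir (v i) (mem_range_self i)
    have htinj : Function.Injective t := by
      intro i j hij
      apply hinj
      rw [ht i, ht j, hij]
    obtain ⟨imin, -, hmin⟩ := Finset.exists_min_image Finset.univ t ⟨0, Finset.mem_univ 0⟩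
    obtain ⟨imax, -, hmax⟩ := Finset.exists_max_image Finset.univ t ⟨0, Finset.mem_univ 0⟩
    obtain ⟨j, hj1, hj2⟩ : ∃ j : Fin n, j ≠ imin ∧ j ≠ imax := by
      by_contra hcon
      push_neg at hcon
      have hsub2 : (Finset.univ : Finset (Fin n)) ⊆ {imin, imax} := by
        intro j _
        rcases eq_or_ne j imin with h | h
        · simp [h]
        · simp [hcon j h]
      have hcard := Finset.card_le_card hsub2
      rw [Finset.card_univ, Fintype.card_fin] at hcard
      have : ({imin, imax} : Finset (Fin n)).card ≤ 2 :=
        (Finset.card_insert_le _ _).trans (by simp)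
      omega
    apply hvert j
    have h1 : t imin ≤ t j := hmin j (Finset.mem_univ j)
    have h2 : t j ≤ t imax := hmax j (Finset.mem_univ j)
    have hlt : t imin < t imax := by
      rcases lt_or_eq_of_le (h1.trans h2) with h | h
      · exact h
      · exact absurd (htinj (le_antisymm h1 (h ▸ h2))).symm hj1
    set s : ℝ := (t j - t imin) / (t imax - t imin) with hs
    have hs0 : 0 ≤ s := div_nonneg (by linarith) (by linarith)
    have hs1 : s ≤ 1 := (div_le_one (by linarith)).mpr (by linarith)
    have hcomb : (1 - s) * t imin + s * t imax = t j := by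
      have hc : s * (t imax - t imin) = t j - t imin := by
        rw [hs]
        exact div_mul_cancel₀ _ (sub_ne_zero.mpr hlt.ne')
      linear_combination hc
    have hseg : v j ∈ segment ℝ (v imin) (v imax) := by
      refine ⟨1 - s, s, by linarith, hs0, by ring, ?_⟩
      rw [ht imin, ht imax, ht j, ← hcomb]
      simp only [smul_add, smul_smul, vadd_eq_add]
      module
    have hpair : ({v imin, v imax} : Set (EuclideanSpace ℝ (Fin 2))) ⊆ v '' {k | k ≠ j} := by
      rintro x (rfl | rfl)
      · exact ⟨imin, fun h => hj1 h.symm, rfl⟩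
      · exact ⟨imax, fun h => hj2 h.symm, rfl⟩
    exact convexHull_mono hpair (by rw [convexHull_pair]; exact hseg)
  -- nonempty interior
  have hspan : affineSpan ℝ (Set.range v) = ⊤ := by
    rw [AffineSubspace.affineSpan_eq_top_iff_vectorSpan_eq_top_of_nonempty ℝ _ _ (range_nonempty v)]
    apply Submodule.eq_top_of_finrank_eq
    have hle : Module.finrank ℝ (vectorSpan ℝ (Set.range v)) ≤ 2 := by
      have := Submodule.finrank_le (vectorSpan ℝ (Set.range v))
      rwa [finrank_euclideanSpace_fin] at this
    have hge : ¬ Module.finrank ℝ (vectorSpan ℝ (Set.range v)) ≤ 1 :=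
      fun h => hncol (collinear_iff_finrank_le_one.mpr h)
    rw [finrank_euclideanSpace_fin]
    omega
  have hint : (interior P).Nonempty := by
    rw [hP, (convex_convexHull ℝ _).interior_nonempty_iff_affineSpan_eq_top,
      affineSpan_convexHull]
    exact hspan
  obtain ⟨w₀, hw₀⟩ := hint
  -- minimum angle attained
  obtain ⟨i₀, -, hi₀⟩ := Finset.exists_min_image Finset.univ
    (fun i : Fin n => EuclideanGeometry.angle (v (i - 1)) (v i) (v (i + 1)))
    ⟨0, Finset.mem_univ 0⟩
  have hαeq : α = EuclideanGeometry.angle (v (i₀ - 1)) (v i₀) (v (i₀ + 1)) := by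
    rw [hα]
    exact le_antisymm (ciInf_le (Set.finite_range _).bddBelow i₀)
      (le_ciInf fun i => hi₀ i (Finset.mem_univ i))
  have hαπ : α < π := by
    have hle : α ≤ π := by
      rw [hαeq]
      exact EuclideanGeometry.angle_le_pi _ _ _
    rcases lt_or_eq_of_le hle with h | h
    · exact h
    · exfalso
      have hsb : Sbtw ℝ (v (i₀ - 1)) (v i₀) (v (i₀ + 1)) :=
        EuclideanGeometry.angle_eq_pi_iff_sbtw.mp (by rw [← hαeq]; exact h)
      have hseg : v i₀ ∈ segment ℝ (v (i₀ - 1)) (v (i₀ + 1)) :=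
        mem_segment_iff_wbtw.mpr hsb.wbtw
      have hpair : ({v (i₀ - 1), v (i₀ + 1)} : Set (EuclideanSpace ℝ (Fin 2)))
          ⊆ v '' {j | j ≠ i₀} := by
        rintro x (rfl | rfl)
        · exact ⟨i₀ - 1, hsubne i₀, rfl⟩
        · exact ⟨i₀ + 1, hadd i₀, rfl⟩
      exact hvert i₀ (convexHull_mono hpair (by rw [convexHull_pair]; exact hseg))
  -- vectors
  set u₁ : EuclideanSpace ℝ (Fin 2) := v (i₀ + 1) - v i₀ with hu₁def
  set u₂ : EuclideanSpace ℝ (Fin 2) := v (i₀ - 1) - v i₀ with hu₂def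
  have hu₁ : u₁ ≠ 0 := sub_ne_zero.mpr (hinj.ne (hadd i₀))
  have hu₂ : u₂ ≠ 0 := sub_ne_zero.mpr (hinj.ne (hsubne i₀))
  have hangle : α = InnerProductGeometry.angle u₂ u₁ := by
    rw [hαeq]
    simp only [EuclideanGeometry.angle, vsub_eq_sub, hu₁def, hu₂def]
  have hangle' : α = InnerProductGeometry.angle u₁ u₂ := by
    rw [hangle, InnerProductGeometry.angle_comm]
  -- spanning
  have hspan2 : Submodule.span ℝ ({u₁, u₂} : Set (EuclideanSpace ℝ (Fin 2))) = ⊤ := by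
    have hli : LinearIndependent ℝ ![u₁, u₂] := by
      rw [linearIndependent_fin2]
      refine ⟨hu₂, fun a hcon => ?_⟩
      simp only [Matrix.cons_val_one, Matrix.head_cons, Matrix.cons_val_zero] at hcon
      have hcon' : u₁ = a • u₂ := hcon.symm
      rcases lt_trichotomy a 0 with h | h | h
      · have : InnerProductGeometry.angle u₂ u₁ = π :=
          InnerProductGeometry.angle_eq_pi_iff.mpr ⟨hu₂, a, h, hcon'⟩
        rw [← hangle] at this
        linarith
      · rw [h, zero_smul] at hcon'
        exact hu₁ hcon'
      · have : InnerProductGeometry.angle u₂ u₁ = 0 :=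
          InnerProductGeometry.angle_eq_zero_iff.mpr ⟨hu₂, a, h, hcon'⟩
        rw [← hangle] at this
        linarith
    apply Submodule.eq_top_of_finrank_eq
    have : Set.range ![u₁, u₂] = {u₁, u₂} := by
      simp [Matrix.range_cons, Matrix.range_empty, Set.pair_comm]
    rw [← this, finrank_span_eq_card hli, finrank_euclideanSpace_fin]
    simp
  have hvanish : ∀ (f : EuclideanSpace ℝ (Fin 2) →L[ℝ] ℝ), f u₁ = 0 → f u₂ = 0 →
      ∀ w : EuclideanSpace ℝ (Fin 2), f w = 0 := by
    intro f h1 h2 w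
    have hle : Submodule.span ℝ ({u₁, u₂} : Set (EuclideanSpace ℝ (Fin 2)))
        ≤ LinearMap.ker (f : EuclideanSpace ℝ (Fin 2) →ₗ[ℝ] ℝ) := by
      rw [Submodule.span_le]
      rintro x (rfl | rfl)
      · simpa [LinearMap.mem_ker] using h1
      · simpa [LinearMap.mem_ker] using h2
    rw [hspan2] at hle
    have := hle (Submodule.mem_top : w ∈ (⊤ : Submodule ℝ (EuclideanSpace ℝ (Fin 2))))
    simpa [LinearMap.mem_ker] using this
  -- supporting lines
  have hm₁ : midpoint ℝ (v i₀) (v (i₀ + 1)) ∉ interior P :=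
    (hcyc i₀ (midpoint_mem_segment _ _)).2
  have hm₂ : midpoint ℝ (v i₀) (v (i₀ - 1)) ∉ interior P := by
    have hmem : midpoint ℝ (v i₀) (v (i₀ - 1)) ∈ segment ℝ (v (i₀ - 1)) (v (i₀ - 1 + 1)) := by
      rw [hsubadd i₀, midpoint_comm]
      exact midpoint_mem_segment _ _
    exact (hcyc (i₀ - 1) hmem).2
  obtain ⟨f₁, hf₁P, hf₁edge, hf₁w₀⟩ :=
    support_line hconv (hsub i₀) (hsub (i₀ + 1)) hm₁ hw₀
  obtain ⟨f₂, hf₂P, hf₂edge, hf₂w₀⟩ :=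
    support_line hconv (hsub i₀) (hsub (i₀ - 1)) hm₂ hw₀
  -- functional facts
  have hf₁u₁ : f₁ u₁ = 0 := by rw [hu₁def, map_sub, hf₁edge, sub_self]
  have hf₂u₂ : f₂ u₂ = 0 := by rw [hu₂def, map_sub, hf₂edge, sub_self]
  have hf₁u₂ : f₁ u₂ < 0 := by
    have hle : f₁ u₂ ≤ 0 := by
      rw [hu₂def, map_sub, sub_nonpos]
      exact hf₁P _ (hsub (i₀ - 1))
    rcases lt_or_eq_of_le hle with h | h
    · exact h
    · exfalso
      have := hvanish f₁ hf₁u₁ h (w₀ - v i₀)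
      rw [map_sub, sub_eq_zero] at this
      rw [this] at hf₁w₀
      exact lt_irrefl _ hf₁w₀
  have hf₂u₁ : f₂ u₁ < 0 := by
    have hle : f₂ u₁ ≤ 0 := by
      rw [hu₁def, map_sub, sub_nonpos]
      exact hf₂P _ (hsub (i₀ + 1))
    rcases lt_or_eq_of_le hle with h | h
    · exact h
    · exfalso
      have := hvanish f₂ h hf₂u₂ (w₀ - v i₀)
      rw [map_sub, sub_eq_zero] at this
      rw [this] at hf₂w₀
      exact lt_irrefl _ hf₂w₀
  -- the cone set
  set d : ℝ := Metric.diam P with hd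
  have hd0 : 0 < d := by
    have h01 : v 0 ≠ v 1 := hinj.ne hone.symm
    have := Metric.dist_le_diam_of_mem hbd (hsub 0) (hsub 1)
    have hpos : 0 < dist (v 0) (v 1) := dist_pos.mpr h01
    linarith
  set K := {w : EuclideanSpace ℝ (Fin 2) | f₁ w ≤ 0 ∧ f₂ w ≤ 0 ∧ ‖w‖ ≤ d} with hK
  have hPK : P ⊆ (fun x => x - v i₀) ⁻¹' K := by
    intro x hx
    refine ⟨?_, ?_, ?_⟩
    · rw [map_sub, sub_nonpos]; exact hf₁P x hx
    · rw [map_sub, sub_nonpos]; exact hf₂P x hx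
    · rw [← dist_eq_norm]
      exact Metric.dist_le_diam_of_mem hbd hx (hsub i₀)
  have htrans : volume ((fun x : EuclideanSpace ℝ (Fin 2) => x - v i₀) ⁻¹' K) = volume K := by
    have heq : (fun x : EuclideanSpace ℝ (Fin 2) => x - v i₀)
        = fun x => x + (-(v i₀)) := funext fun x => sub_eq_add_neg x (v i₀)
    rw [heq, measure_preimage_add_right]
  have hKvol : volume K ≤ ENNReal.ofReal (α * d ^ 2 / 2) :=
    cone_vol f₁ f₂ u₁ u₂ hu₁ hu₂ hangle' hα0 hαπ hf₁u₁ hf₁u₂ hf₂u₂ hf₂u₁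
      (Metric.diam_nonneg)
  have hPvol : volume P ≤ ENNReal.ofReal (α * d ^ 2 / 2) :=
    (measure_mono hPK).trans (htrans.le.trans hKvol)
  -- final arithmetic
  have hVle : (volume P).toReal ≤ α * d ^ 2 / 2 :=
    ENNReal.toReal_le_of_le_ofReal (by positivity) hPvol
  have hV0 : 0 < (volume P).toReal :=
    ENNReal.toReal_pos (Measure.measure_pos_of_nonempty_interior _ ⟨w₀, hw₀⟩).ne'
      hbd.measure_lt_top.ne
  show 2 / α ≤ d ^ 2 / (volume P).toReal
  rw [div_le_div_iff₀ hα0 hV0]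
  nlinarith [hVle, hα0, hV0]

end Main
end

section
/- Any rooted tree T with n nodes can be transformed into a binary tree T' (every internal node has at most two children) whose leaves are exactly the leaves of T, such that two original nodes of T are in ancestor–descendant relation in T' if and only if they are in that relation in T, and depth(T') ≤ 2·(depth(T) + log₂ n). -/
/-- A rooted tree on a finite vertex type, given by its parent function. -/
structure FRTree (V : Type) [Fintype V] [DecidableEq V] where
  root : V
  parent : V → V
  root_fixed : parent root = root
  reaches : ∀ v : V, ∃ k : ℕ, parent^[k] v = root

variable {V : Type} [Fintype V] [DecidableEq V]

/-- The depth of a node: the number of edges on the path to the root. -/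
noncomputable def frNodeDepth (T : FRTree V) (v : V) : ℕ :=
  Nat.find (T.reaches v)

/-- The depth of a rooted tree: the maximum number of edges on a root-to-leaf path. -/
noncomputable def frDepth (T : FRTree V) : ℕ :=
  Finset.univ.sup (frNodeDepth T)

/-- `u` is an frAncestor of `v` (possibly `u = v`). -/
def frAncestor (T : FRTree V) (u v : V) : Prop :=
  ∃ k : ℕ, T.parent^[k] v = u

/-- A node is a leaf if it has no frChildren. -/
def frIsLeaf (T : FRTree V) (v : V) : Prop :=
  ∀ u, T.parent u = v → u = v

/-- The frChildren of a node. -/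
def frChildren (T : FRTree V) (v : V) : Finset V :=
  Finset.univ.filter fun u => T.parent u = v ∧ u ≠ v



set_option linter.unusedSectionVars false
set_option linter.unusedVariables false
set_option maxHeartbeats 1000000

namespace Stmt2Aux
variable {α : Type*} [DecidableEq α]

def wsum (l : List (α × ℕ)) : ℕ := (l.map Prod.snd).sum

@[simp] lemma wsum_nil : wsum ([] : List (α × ℕ)) = 0 := rfl
@[simp] lemma wsum_cons (x : α × ℕ) (l : List (α × ℕ)) : wsum (x :: l) = x.2 + wsum l := rfl

lemma wsum_perm {l l' : List (α × ℕ)} (h : l.Perm l') : wsum l = wsum l' :=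
  (h.map Prod.snd).sum_eq

lemma wsum_append (l l' : List (α × ℕ)) : wsum (l ++ l') = wsum l + wsum l' := by
  simp [wsum]

lemma le_wsum {l : List (α × ℕ)} {x : α × ℕ} (h : x ∈ l) : x.2 ≤ wsum l := by
  induction l with
  | nil => simp at h
  | cons y l ih =>
    rcases List.mem_cons.mp h with rfl | h
    · simp
    · have := ih h; simp; omega

def pickMax (x : α × ℕ) : List (α × ℕ) → (α × ℕ)
  | [] => x
  | y :: l => if x.2 < y.2 then pickMax y l else pickMax x l

lemma pickMax_mem (x : α × ℕ) (l : List (α × ℕ)) : pickMax x l ∈ x :: l := by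
  induction l generalizing x with
  | nil => simp [pickMax]
  | cons y l ih =>
    simp only [pickMax]
    split
    · have := ih y; simp at this ⊢; tauto
    · have := ih x; simp at this ⊢; tauto

lemma pickMax_le (x : α × ℕ) (l : List (α × ℕ)) : ∀ z ∈ x :: l, z.2 ≤ (pickMax x l).2 := by
  induction l generalizing x with
  | nil => simp [pickMax]
  | cons y l ih =>
    intro z hz
    simp only [List.mem_cons] at hz
    by_cases h : x.2 < y.2 <;> simp only [pickMax, h, if_true, if_false]
    · rcases hz with rfl | rfl | hz
      · exact le_trans (le_of_lt h) (ih y y (by simp))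
      · exact ih z z (by simp)
      · exact ih y z (by simp [hz])
    · rcases hz with rfl | rfl | hz
      · exact ih z z (by simp)
      · exact le_trans (by omega) (ih x x (by simp))
      · exact ih x z (by simp [hz])

def myerase (a : α) : List α → List α
  | [] => []
  | x :: l => if x = a then l else x :: myerase a l

lemma myerase_perm {a : α} : ∀ {l : List α}, a ∈ l → l.Perm (a :: myerase a l) := by
  intro l
  induction l with
  | nil => simp
  | cons x l ih =>
    intro h
    by_cases hx : x = a
    · subst hx; simp [myerase]
    · have ha : a ∈ l := by
        rcases List.mem_cons.mp h with h' | h'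
        · exact absurd h'.symm hx
        · exact h' 
      simp only [myerase, hx, if_false]
      exact ((ih ha).cons x).trans (List.Perm.swap a x _)

lemma myerase_len_mem {a : α} : ∀ {l : List α}, a ∈ l → (myerase a l).length + 1 = l.length := by
  intro l h
  have := (myerase_perm h).length_eq
  simp at this; omega

lemma myerase_subset {a : α} {l : List α} : ∀ {x : α}, x ∈ myerase a l → x ∈ l := by
  induction l with
  | nil => simp [myerase]
  | cons y l ih =>
    intro x hx
    simp only [myerase] at hx
    split at hx
    · exact List.mem_cons_of_mem _ hx
    · rcases List.mem_cons.mp hx with rfl | hx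
      · exact List.mem_cons_self
      · exact List.mem_cons_of_mem _ (ih hx)

def gsplit (M : ℕ) : ℕ → List (α × ℕ) → List (α × ℕ) × List (α × ℕ)
  | _, [] => ([], [])
  | acc, x :: xs =>
    if 2 * (acc + x.2) ≤ M then
      let p := gsplit M (acc + x.2) xs
      (x :: p.1, p.2)
    else
      let p := gsplit M acc xs
      (p.1, x :: p.2)

lemma gsplit_perm (M acc : ℕ) (l : List (α × ℕ)) :
    ((gsplit M acc l).1 ++ (gsplit M acc l).2).Perm l := by
  induction l generalizing acc with
  | nil => simp [gsplit]
  | cons x xs ih =>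
    simp only [gsplit]
    split
    · simpa using (ih (acc + x.2)).cons x
    · exact ((List.perm_middle).trans ((ih acc).cons x))

lemma gsplit_A_le (M : ℕ) : ∀ (acc : ℕ) (l : List (α × ℕ)), 2 * acc ≤ M →
    2 * (acc + wsum (gsplit M acc l).1) ≤ M := by
  intro acc l
  induction l generalizing acc with
  | nil => intro h; simpa [gsplit] using h
  | cons x xs ih =>
    intro h
    simp only [gsplit]
    split
    · rename_i hle
      have := ih (acc + x.2) hle
      simp only [wsum_cons]; omega
    · rename_i hgt
      have := ih acc h
      dsimp only
      omega

lemma gsplit_B_witness (M : ℕ) : ∀ (acc : ℕ) (l : List (α × ℕ)),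
    (gsplit M acc l).2 = [] ∨
    ∃ x ∈ (gsplit M acc l).2, M < 2 * (acc + wsum (gsplit M acc l).1) + 2 * x.2 := by
  intro acc l
  induction l generalizing acc with
  | nil => left; simp [gsplit]
  | cons x xs ih =>
    simp only [gsplit]
    split
    · rename_i hle
      rcases ih (acc + x.2) with h | ⟨y, hy, hlt⟩
      · left; simpa using h
      · right; exact ⟨y, by simpa using hy, by simp only [wsum_cons]; omega⟩
    · rename_i hgt
      right
      refine ⟨x, by simp, ?_⟩
      omega

/-- the binary-string gadget for a weighted list of children -/
def gadget (M : ℕ) : List (α × ℕ) → List (α × List Bool)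
  | [] => []
  | [(a, _)] => [(a, [false])]
  | x :: y :: l =>
    let h := pickMax x (y :: l)
    let rest := myerase h (x :: y :: l)
    let p := gsplit M 0 rest
    (h.1, [false]) ::
      ((gadget (M / 2) p.1).map (fun q => (q.1, true :: false :: q.2)) ++
       (gadget (M / 2) p.2).map (fun q => (q.1, true :: true :: q.2)))
  termination_by l => l.length
  decreasing_by
  · have h1 := myerase_len_mem (pickMax_mem x (y :: l))
    have h2 := (gsplit_perm M 0 (myerase (pickMax x (y :: l)) (x :: y :: l))).length_eq
    simp at h1 h2 ⊢; omega
  · have h1 := myerase_len_mem (pickMax_mem x (y :: l))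
    have h2 := (gsplit_perm M 0 (myerase (pickMax x (y :: l)) (x :: y :: l))).length_eq
    simp at h1 h2 ⊢; omega

lemma gadget_nonempty (M : ℕ) (l : List (α × ℕ)) :
    ∀ p ∈ gadget M l, p.2 ≠ [] := by
  induction M, l using gadget.induct with
  | case1 M => simp [gadget]
  | case2 M a s => simp [gadget]
  | case3 M x y l hv restv pv ih1 ih2 =>
    intro p hp
    simp only [gadget, List.mem_cons, List.mem_append, List.mem_map] at hp
    rcases hp with rfl | ⟨q, hq, rfl⟩ | ⟨q, hq, rfl⟩ <;> simp

lemma gadget_keys (M : ℕ) (l : List (α × ℕ)) :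
    ((gadget M l).map Prod.fst).Perm (l.map Prod.fst) := by
  induction M, l using gadget.induct with
  | case1 M => simp [gadget]
  | case2 M a s => simp [gadget]
  | case3 M x y l hv restv pv ih1 ih2 =>
    have e0 : pv = gsplit M 0 (myerase (pickMax x (y :: l)) (x :: y :: l)) := rfl
    rw [e0] at ih1 ih2
    have hperm : (x :: y :: l).Perm
        (pickMax x (y :: l) :: myerase (pickMax x (y :: l)) (x :: y :: l)) :=
      myerase_perm (pickMax_mem x (y :: l))
    simp only [gadget, List.map_cons, List.map_append, List.map_map]
    have e1 : (Prod.fst ∘ fun q : α × List Bool => (q.1, true :: false :: q.2)) = Prod.fst := rfl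
    have e2 : (Prod.fst ∘ fun q : α × List Bool => (q.1, true :: true :: q.2)) = Prod.fst := rfl
    rw [e1, e2]
    refine List.Perm.trans (List.Perm.cons _
      ((ih1.append ih2).trans
        (by simpa using
          ((gsplit_perm M 0 (myerase (pickMax x (y :: l)) (x :: y :: l))).map Prod.fst)))) ?_
    simpa using (hperm.map Prod.fst).symm

/-- prefix-incomparability -/
def Incomp (p q : α × List Bool) : Prop := ¬ (p.2 <+: q.2) ∧ ¬ (q.2 <+: p.2)

lemma gadget_pairwise (M : ℕ) (l : List (α × ℕ)) :
    (gadget M l).Pairwise Incomp := by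
  induction M, l using gadget.induct with
  | case1 M => simp [gadget]
  | case2 M a s => simp [gadget]
  | case3 M x y l hv restv pv ih1 ih2 =>
    simp only [gadget]
    refine List.Pairwise.cons ?_ ?_
    · intro q hq
      simp only [List.mem_append, List.mem_map] at hq
      constructor
      · rcases hq with ⟨r, hr, rfl⟩ | ⟨r, hr, rfl⟩ <;>
          · intro hpre; rcases hpre with ⟨t, ht⟩; simp at ht
      · rcases hq with ⟨r, hr, rfl⟩ | ⟨r, hr, rfl⟩ <;>
          · intro hpre; rcases hpre with ⟨t, ht⟩; simp at ht
    · rw [List.pairwise_append]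
      refine ⟨?_, ?_, ?_⟩
      · refine (List.pairwise_map).mpr ?_
        refine ih1.imp ?_
        intro a b hab
        refine ⟨?_, ?_⟩
        · intro hp; exact hab.1 (by simpa [List.cons_prefix_cons] using hp)
        · intro hp; exact hab.2 (by simpa [List.cons_prefix_cons] using hp)
      · refine (List.pairwise_map).mpr ?_
        refine ih2.imp ?_
        intro a b hab
        refine ⟨?_, ?_⟩
        · intro hp; exact hab.1 (by simpa [List.cons_prefix_cons] using hp)
        · intro hp; exact hab.2 (by simpa [List.cons_prefix_cons] using hp)
      · intro a ha b hb
        simp only [List.mem_map] at ha hb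
        obtain ⟨r, hr, rfl⟩ := ha
        obtain ⟨t, ht, rfl⟩ := hb
        constructor
        · intro hp; simp [List.cons_prefix_cons] at hp
        · intro hp; simp [List.cons_prefix_cons] at hp

lemma gadget_weight (M : ℕ) (l : List (α × ℕ)) (hM : wsum l ≤ M) :
    ∀ p ∈ gadget M l, ∃ s, (p.1, s) ∈ l ∧ s * 2 ^ (p.2.length / 2) ≤ M := by
  induction M, l using gadget.induct with
  | case1 M => simp [gadget]
  | case2 M a s =>
    intro p hp
    simp only [gadget, List.mem_singleton] at hp
    subst hp
    refine ⟨s, by simp, ?_⟩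
    simpa using hM
  | case3 M x y l hv restv pv ih1 ih2 =>
    intro p hp
    have e0 : pv = gsplit M 0 (myerase (pickMax x (y :: l)) (x :: y :: l)) := rfl
    rw [e0] at ih1 ih2
    set h := pickMax x (y :: l) with hh
    set rest := myerase h (x :: y :: l) with hrest
    have hmem : h ∈ x :: y :: l := pickMax_mem x (y :: l)
    have hperm : (x :: y :: l).Perm (h :: rest) := myerase_perm hmem
    have hsum : wsum (x :: y :: l) = h.2 + wsum rest := by
      have := wsum_perm hperm; simpa using this
    have hAB := gsplit_perm M 0 rest
    have hsumAB : wsum (gsplit M 0 rest).1 + wsum (gsplit M 0 rest).2 = wsum rest := by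
      have := wsum_perm hAB; rw [wsum_append] at this; exact this
    have hA2 : 2 * wsum (gsplit M 0 rest).1 ≤ M := by
      have := gsplit_A_le M 0 rest (by omega); omega
    have hB2 : 2 * wsum (gsplit M 0 rest).2 ≤ M := by
      rcases gsplit_B_witness M 0 rest with hB | ⟨z, hz, hlt⟩
      · rw [hB]; simp
      · have hzrest : z ∈ rest := (hAB.subset) (by simp [hz])
        have hzl : z ∈ x :: y :: l := myerase_subset hzrest
        have hzle : z.2 ≤ h.2 := pickMax_le x (y :: l) z hzl
        omega
    have hA : wsum (gsplit M 0 rest).1 ≤ M / 2 := by omega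
    have hB : wsum (gsplit M 0 rest).2 ≤ M / 2 := by omega
    simp only [gadget, List.mem_cons, List.mem_append, List.mem_map] at hp
    rcases hp with rfl | ⟨q, hq, rfl⟩ | ⟨q, hq, rfl⟩
    · refine ⟨h.2, ?_, ?_⟩
      · simpa using hmem
      · have h1 := le_wsum hmem
        have h2 : h.2 ≤ M := le_trans h1 hM
        simpa using h2
    · obtain ⟨s, hsl, hb⟩ := ih1 hA q hq
      refine ⟨s, ?_, ?_⟩
      · have : (q.1, s) ∈ rest := hAB.subset (by simp [hsl])
        exact myerase_subset this
      · simp only [List.length_cons]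
        have hlen : (q.2.length + 1 + 1) / 2 = q.2.length / 2 + 1 := by omega
        rw [hlen, pow_succ]
        have h2 : s * (2 ^ (q.2.length / 2) * 2) = s * 2 ^ (q.2.length / 2) * 2 := by ring
        rw [h2]
        omega
    · obtain ⟨s, hsl, hb⟩ := ih2 hB q hq
      refine ⟨s, ?_, ?_⟩
      · have : (q.1, s) ∈ rest := hAB.subset (by simp [hsl])
        exact myerase_subset this
      · simp only [List.length_cons]
        have hlen : (q.2.length + 1 + 1) / 2 = q.2.length / 2 + 1 := by omega
        rw [hlen, pow_succ]
        have h2 : s * (2 ^ (q.2.length / 2) * 2) = s * 2 ^ (q.2.length / 2) * 2 := by ring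
        rw [h2]
        omega

/-- simple association-list lookup -/
def lk (a : α) : List (α × β) → Option β
  | [] => none
  | p :: l => if p.1 = a then some p.2 else lk a l

lemma lk_mem {β : Type*} {a : α} {b : β} : ∀ {l : List (α × β)}, lk a l = some b → (a, b) ∈ l := by
  intro l
  induction l with
  | nil => simp [lk]
  | cons p l ih =>
    intro h
    simp only [lk] at h
    split at h
    · rename_i hpa
      cases p
      simp_all
    · exact List.mem_cons_of_mem _ (ih h)

lemma lk_isSome {β : Type*} {a : α} : ∀ {l : List (α × β)}, a ∈ l.map Prod.fst → ∃ b, lk a l = some b := by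
  intro l
  induction l with
  | nil => simp
  | cons p l ih =>
    intro h
    simp only [lk]
    split
    · exact ⟨p.2, rfl⟩
    · rename_i hne
      rcases List.mem_map.mp h with ⟨q, hq, hqa⟩
      rcases List.mem_cons.mp hq with rfl | hq
      · exact absurd hqa hne
      · exact ih (List.mem_map.mpr ⟨q, hq, hqa⟩)

end Stmt2Aux

namespace Stmt2Aux

lemma iterate_root (T : FRTree V) (k : ℕ) : T.parent^[k] T.root = T.root := by
  induction k with
  | zero => rfl
  | succ k ih => rw [Function.iterate_succ_apply', ih, T.root_fixed]

lemma nodeDepth_spec (T : FRTree V) (v : V) : T.parent^[frNodeDepth T v] v = T.root :=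
  Nat.find_spec (T.reaches v)

lemma nodeDepth_min (T : FRTree V) {v : V} {k : ℕ} (h : k < frNodeDepth T v) :
    T.parent^[k] v ≠ T.root :=
  Nat.find_min (T.reaches v) h

lemma nodeDepth_le (T : FRTree V) {v : V} {k : ℕ} (h : T.parent^[k] v = T.root) :
    frNodeDepth T v ≤ k :=
  Nat.find_le h

@[simp] lemma nodeDepth_root (T : FRTree V) : frNodeDepth T T.root = 0 :=
  Nat.le_zero.mp (nodeDepth_le T (by rfl))

lemma parent_self_iff (T : FRTree V) {v : V} (h : T.parent v = v) : v = T.root := by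
  by_contra hv
  obtain ⟨k, hk⟩ := T.reaches v
  have hfix : ∀ k : ℕ, T.parent^[k] v = v := by
    intro k
    induction k with
    | zero => rfl
    | succ k ih => rw [Function.iterate_succ_apply, h, ih]
  rw [hfix k] at hk
  exact hv hk

lemma nodeDepth_parent (T : FRTree V) {v : V} (h : v ≠ T.root) :
    frNodeDepth T v = frNodeDepth T (T.parent v) + 1 := by
  have hpos : 0 < frNodeDepth T v := by
    rcases Nat.eq_zero_or_pos (frNodeDepth T v) with h1 | h1
    · exact absurd (by simpa [h1] using nodeDepth_spec T v) h
    · exact h1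
  have h1 : T.parent^[frNodeDepth T v - 1] (T.parent v) = T.root := by
    have := nodeDepth_spec T v
    rwa [show frNodeDepth T v = (frNodeDepth T v - 1) + 1 by omega,
      Function.iterate_succ_apply] at this
  have h2 : frNodeDepth T (T.parent v) ≤ frNodeDepth T v - 1 := nodeDepth_le T h1
  have h3 : T.parent^[frNodeDepth T (T.parent v) + 1] v = T.root := by
    rw [Function.iterate_succ_apply]
    exact nodeDepth_spec T (T.parent v)
  have h4 := nodeDepth_le T h3
  omega

lemma frAncestor_refl (T : FRTree V) (v : V) : frAncestor T v v := ⟨0, rfl⟩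

lemma frAncestor_root (T : FRTree V) (v : V) : frAncestor T T.root v := T.reaches v

lemma frAncestor_of_root (T : FRTree V) {v : V} (h : frAncestor T v T.root) : v = T.root := by
  obtain ⟨k, hk⟩ := h
  rw [iterate_root] at hk
  exact hk.symm

lemma frAncestor_trans (T : FRTree V) {u v w : V} (h1 : frAncestor T u v) (h2 : frAncestor T v w) :
    frAncestor T u w := by
  obtain ⟨k1, hk1⟩ := h1
  obtain ⟨k2, hk2⟩ := h2
  exact ⟨k1 + k2, by rw [Function.iterate_add_apply, hk2, hk1]⟩

lemma frAncestor_parent (T : FRTree V) (v : V) : frAncestor T (T.parent v) v := ⟨1, rfl⟩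

/-- a strict ancestor is an ancestor of the parent -/
lemma frAncestor_of_ne (T : FRTree V) {u v : V} (h : frAncestor T u v) (hne : u ≠ v) :
    frAncestor T u (T.parent v) := by
  obtain ⟨k, hk⟩ := h
  cases k with
  | zero => exact absurd hk.symm hne
  | succ k => exact ⟨k, by rwa [Function.iterate_succ_apply] at hk⟩

lemma nodeDepth_le_of_anc (T : FRTree V) {u v : V} (h : frAncestor T u v) :
    frNodeDepth T u ≤ frNodeDepth T v := by
  obtain ⟨k, hk⟩ := h
  subst hk
  induction k with
  | zero => simp
  | succ k ih =>
    rw [Function.iterate_succ_apply']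
    refine le_trans ?_ ih
    by_cases hr : T.parent^[k] v = T.root
    · rw [hr, T.root_fixed]
    · rw [nodeDepth_parent T hr]; omega

lemma nodeDepth_lt_of_anc (T : FRTree V) {u v : V} (h : frAncestor T u v) (hne : u ≠ v) :
    frNodeDepth T u < frNodeDepth T v := by
  have hv : v ≠ T.root := by
    intro hv; subst hv; exact hne (frAncestor_of_root T h)
  have h1 := nodeDepth_le_of_anc T (frAncestor_of_ne T h hne)
  rw [nodeDepth_parent T hv]
  omega

lemma frAncestor_antisymm (T : FRTree V) {u v : V} (h1 : frAncestor T u v)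
    (h2 : frAncestor T v u) : u = v := by
  by_contra hne
  have := nodeDepth_lt_of_anc T h1 hne
  have := nodeDepth_lt_of_anc T h2 (Ne.symm hne)
  omega

lemma frAncestor_total (T : FRTree V) {u c1 c2 : V} (h1 : frAncestor T c1 u)
    (h2 : frAncestor T c2 u) : frAncestor T c1 c2 ∨ frAncestor T c2 c1 := by
  obtain ⟨k1, hk1⟩ := h1
  obtain ⟨k2, hk2⟩ := h2
  rcases le_total k1 k2 with h | h
  · right
    exact ⟨k2 - k1, by rw [← hk1, ← Function.iterate_add_apply, Nat.sub_add_cancel h, hk2]⟩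
  · left
    exact ⟨k1 - k2, by rw [← hk2, ← Function.iterate_add_apply, Nat.sub_add_cancel h, hk1]⟩

lemma mem_frChildren (T : FRTree V) {c p : V} :
    c ∈ frChildren T p ↔ T.parent c = p ∧ c ≠ p := by
  simp [frChildren]

lemma frChildren_ne_root (T : FRTree V) {c p : V} (h : c ∈ frChildren T p) : c ≠ T.root := by
  rw [mem_frChildren] at h
  intro hc
  subst hc
  exact h.2 (by rw [← h.1, T.root_fixed])

lemma nodeDepth_child (T : FRTree V) {c p : V} (h : c ∈ frChildren T p) :
    frNodeDepth T c = frNodeDepth T p + 1 := by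
  rw [mem_frChildren] at h
  rw [nodeDepth_parent T (frChildren_ne_root T (by rw [mem_frChildren]; exact h)), h.1]

lemma frIsLeaf_anc (T : FRTree V) {v u : V} (hl : frIsLeaf T v) (h : frAncestor T v u) :
    u = v := by
  obtain ⟨k, hk⟩ := h
  induction k generalizing u with
  | zero => exact hk
  | succ k ih =>
    rw [Function.iterate_succ_apply] at hk
    exact hl u (ih hk)

/-- the child of `w` in direction of a strict descendant `u` -/
lemma exists_child_anc (T : FRTree V) {w u : V} (h : frAncestor T w u) (hne : u ≠ w) :
    ∃ c ∈ frChildren T w, frAncestor T c u := by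
  obtain ⟨k, hk⟩ := h
  induction k generalizing u with
  | zero => exact absurd hk hne
  | succ k ih =>
    rw [Function.iterate_succ_apply] at hk
    by_cases hp : T.parent u = w
    · refine ⟨u, ?_, frAncestor_refl T u⟩
      rw [mem_frChildren]
      exact ⟨hp, hne⟩
    · by_cases hu : T.parent u = u
      · have hroot : u = T.root := parent_self_iff T hu
        subst hroot
        rw [T.root_fixed, iterate_root] at hk
        exact absurd hk hne
      · obtain ⟨c, hc, hanc⟩ := ih hp hk
        exact ⟨c, hc, frAncestor_trans T hanc (frAncestor_parent T u)⟩

end Stmt2Aux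

namespace Stmt2Aux
variable {V : Type} [Fintype V] [DecidableEq V]

open scoped Classical in
/-- set of descendants (including itself) -/
noncomputable def desc (T : FRTree V) (v : V) : Finset V :=
  Finset.univ.filter (fun u => frAncestor T v u)

lemma mem_desc {T : FRTree V} {v u : V} : u ∈ desc T v ↔ frAncestor T v u := by
  simp [desc]

/-- subtree size -/
noncomputable def tsize (T : FRTree V) (v : V) : ℕ := (desc T v).card

lemma tsize_pos (T : FRTree V) (v : V) : 1 ≤ tsize T v :=
  Finset.card_pos.mpr ⟨v, mem_desc.mpr (frAncestor_refl T v)⟩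

lemma tsize_le_card (T : FRTree V) (v : V) : tsize T v ≤ Fintype.card V := by
  classical
  exact le_trans (Finset.card_le_card (Finset.subset_univ _)) (by simp)

lemma desc_child_subset (T : FRTree V) {c p : V} (h : c ∈ frChildren T p) :
    desc T c ⊆ desc T p \ {p} := by
  intro u hu
  rw [mem_desc] at hu
  rw [mem_frChildren] at h
  rw [Finset.mem_sdiff, mem_desc, Finset.mem_singleton]
  constructor
  · exact frAncestor_trans T (h.1 ▸ frAncestor_parent T c) hu
  · intro hup
    subst hup
    exact h.2 (frAncestor_antisymm T hu (h.1 ▸ frAncestor_parent T c))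

lemma desc_child_disjoint (T : FRTree V) {c1 c2 p : V} (h1 : c1 ∈ frChildren T p)
    (h2 : c2 ∈ frChildren T p) (hne : c1 ≠ c2) : Disjoint (desc T c1) (desc T c2) := by
  rw [Finset.disjoint_left]
  intro u hu1 hu2
  rw [mem_desc] at hu1 hu2
  rcases frAncestor_total T hu1 hu2 with h | h
  · have d1 := nodeDepth_child T h1
    have d2 := nodeDepth_child T h2
    have := nodeDepth_lt_of_anc T h hne
    omega
  · have d1 := nodeDepth_child T h1
    have d2 := nodeDepth_child T h2
    have := nodeDepth_lt_of_anc T h (Ne.symm hne)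
    omega

lemma sum_tsize_children (T : FRTree V) (p : V) :
    ∑ c ∈ frChildren T p, tsize T c + 1 ≤ tsize T p := by
  classical
  have hdisj : ∀ c1 ∈ frChildren T p, ∀ c2 ∈ frChildren T p, c1 ≠ c2 →
      Disjoint (desc T c1) (desc T c2) := fun c1 h1 c2 h2 hne =>
    desc_child_disjoint T h1 h2 hne
  have hcard := Finset.card_biUnion hdisj
  have hsub : (frChildren T p).biUnion (desc T) ⊆ desc T p \ {p} := by
    intro u hu
    rw [Finset.mem_biUnion] at hu
    obtain ⟨c, hc, hu⟩ := hu
    exact desc_child_subset T hc hu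
  have hle := Finset.card_le_card hsub
  have hp : ({p} : Finset V) ⊆ desc T p := by
    simp [mem_desc, frAncestor_refl]
  have hcards : (desc T p \ {p}).card = tsize T p - 1 := by
    rw [Finset.card_sdiff_of_subset hp, Finset.card_singleton]
    rfl
  have := tsize_pos T p
  rw [hcard] at hle
  rw [hcards] at hle
  have hrw : ∑ u ∈ frChildren T p, (desc T u).card = ∑ c ∈ frChildren T p, tsize T c := rfl
  rw [hrw] at hle
  omega

variable (T : FRTree V)

/-- weighted children list -/
noncomputable def wlist (p : V) : List (V × ℕ) :=
  (frChildren T p).toList.map (fun c => (c, tsize T c))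

/-- the gadget strings for the children of `p` -/
noncomputable def glist (p : V) : List (V × List Bool) :=
  gadget (tsize T p - 1) (wlist T p)

/-- the string assigned to child `v` of `p` -/
noncomputable def gam (p v : V) : List Bool := (lk v (glist T p)).getD [true]

lemma wlist_keys (p : V) : (wlist T p).map Prod.fst = (frChildren T p).toList := by
  rw [wlist, List.map_map]
  have : (Prod.fst ∘ fun c : V => (c, tsize T c)) = id := rfl
  rw [this, List.map_id]

lemma wsum_wlist (p : V) : wsum (wlist T p) ≤ tsize T p - 1 := by
  have h1 : wsum (wlist T p) = ∑ c ∈ frChildren T p, tsize T c := by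
    rw [wsum, wlist, List.map_map]
    have : (Prod.snd ∘ fun c => (c, tsize T c)) = fun c => tsize T c := rfl
    rw [this]
    exact Finset.sum_map_toList _ _
  have h2 := sum_tsize_children T p
  omega

lemma gam_mem {p v : V} (h : v ∈ frChildren T p) : (v, gam T p v) ∈ glist T p := by
  have hkeys := gadget_keys (tsize T p - 1) (wlist T p)
  have hv : v ∈ (glist T p).map Prod.fst := by
    rw [glist]
    refine hkeys.mem_iff.mpr ?_
    rw [wlist_keys]
    simpa using h
  obtain ⟨b, hb⟩ := lk_isSome hv
  have : gam T p v = b := by rw [gam, hb]; rfl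
  rw [this]
  exact lk_mem hb

lemma gam_ne_nil {p v : V} (h : v ∈ frChildren T p) : gam T p v ≠ [] := by
  have := gadget_nonempty (tsize T p - 1) (wlist T p) _ (gam_mem T h)
  simpa using this

lemma gam_incomp {p v w : V} (hv : v ∈ frChildren T p) (hw : w ∈ frChildren T p)
    (hne : v ≠ w) : ¬ (gam T p v <+: gam T p w) := by
  have hpair := gadget_pairwise (tsize T p - 1) (wlist T p)
  have hsymm : Symmetric (Incomp (α := V)) := by
    intro a b hab
    exact ⟨hab.2, hab.1⟩
  haveI : Std.Symm (Incomp (α := V)) := ⟨fun _ _ h => hsymm h⟩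
  have := hpair.forall (gam_mem T hv) (gam_mem T hw)
    (by intro he; exact hne (congrArg Prod.fst he))
  exact this.1

lemma gam_weight {p v : V} (h : v ∈ frChildren T p) :
    tsize T v * 2 ^ ((gam T p v).length / 2) ≤ tsize T p - 1 := by
  obtain ⟨s, hs, hb⟩ := gadget_weight (tsize T p - 1) (wlist T p) (wsum_wlist T p) _ (gam_mem T h)
  have : s = tsize T v := by
    rw [wlist] at hs
    obtain ⟨c, hc, hcs⟩ := List.mem_map.mp hs
    have h1 : c = v := congrArg Prod.fst hcs
    have h2 : tsize T c = s := congrArg Prod.snd hcs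
    rw [← h2, h1]
  rwa [this] at hb

/-- the binary code of a node -/
noncomputable def code : V → List Bool := fun v =>
  if h : v = T.root then [] else code (T.parent v) ++ gam T (T.parent v) v
  termination_by v => frNodeDepth T v
  decreasing_by
    rw [nodeDepth_parent T h]
    omega

lemma code_root : code T T.root = [] := by rw [code]; simp

lemma code_of_ne_root {v : V} (h : v ≠ T.root) :
    code T v = code T (T.parent v) ++ gam T (T.parent v) v := by
  rw [code]
  simp [h]

lemma self_mem_children_parent {v : V} (h : v ≠ T.root) :
    v ∈ frChildren T (T.parent v) := by
  rw [mem_frChildren]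
  refine ⟨rfl, ?_⟩
  intro he
  exact h (parent_self_iff T he.symm)

lemma code_prefix_of_anc {u v : V} (h : frAncestor T u v) : code T u <+: code T v := by
  have H : ∀ n : ℕ, ∀ v : V, frNodeDepth T v ≤ n → frAncestor T u v → code T u <+: code T v := by
    intro n
    induction n with
    | zero =>
      intro v hd hanc
      have hv : v = T.root := by
        have h0 : frNodeDepth T v = 0 := by omega
        have := nodeDepth_spec T v
        rwa [h0] at this
      subst hv
      have : u = T.root := frAncestor_of_root T hanc
      rw [this]
    | succ n ih =>
      intro v hd hanc
      by_cases he : u = v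
      · rw [he]
      · have hv : v ≠ T.root := by
          intro hv; subst hv; exact he (frAncestor_of_root T hanc)
        have h1 : frAncestor T u (T.parent v) := frAncestor_of_ne T hanc he
        have h2 : frNodeDepth T (T.parent v) ≤ n := by
          have := nodeDepth_parent T hv
          omega
        refine List.IsPrefix.trans (ih (T.parent v) h2 h1) ?_
        rw [code_of_ne_root T hv]
        exact List.prefix_append _ _
  exact H (frNodeDepth T v) v le_rfl h

lemma code_length_lt {u v : V} (h : frAncestor T u v) (hne : u ≠ v) :
    (code T u).length < (code T v).length := by
  have hv : v ≠ T.root := by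
    intro hv; subst hv; exact hne (frAncestor_of_root T h)
  have h1 : frAncestor T u (T.parent v) := frAncestor_of_ne T h hne
  have h2 := (code_prefix_of_anc T h1).length_le
  rw [code_of_ne_root T hv, List.length_append]
  have h3 : 0 < (gam T (T.parent v) v).length :=
    List.length_pos_iff.mpr (gam_ne_nil T (self_mem_children_parent T hv))
  omega

lemma code_incomp {u v : V} (hu : ¬ frAncestor T u v) (hv : ¬ frAncestor T v u) :
    ¬ (code T u <+: code T v) := by
  classical
  -- deepest common ancestor
  set S : Finset V := Finset.univ.filter
    (fun w => frAncestor T w u ∧ frAncestor T w v) with hS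
  have hSne : S.Nonempty := ⟨T.root, by simp [hS, frAncestor_root]⟩
  obtain ⟨w, hwS, hwmax⟩ := Finset.exists_max_image S (frNodeDepth T) hSne
  rw [hS, Finset.mem_filter] at hwS
  obtain ⟨-, hwu, hwv⟩ := hwS
  have hwune : u ≠ w := by intro he; subst he; exact hu hwv
  have hwvne : v ≠ w := by intro he; subst he; exact hv hwu
  obtain ⟨cu, hcu, hcuu⟩ := exists_child_anc T hwu hwune
  obtain ⟨cv, hcv, hcvv⟩ := exists_child_anc T hwv hwvne
  have hcne : cu ≠ cv := by
    intro he
    subst he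
    have hmem : cu ∈ S := by
      rw [hS, Finset.mem_filter]
      exact ⟨Finset.mem_univ _, hcuu, hcvv⟩
    have := hwmax cu hmem
    have := nodeDepth_child T hcu
    omega
  -- codes
  have hpu : code T cu <+: code T u := code_prefix_of_anc T hcuu
  have hpv : code T cv <+: code T v := code_prefix_of_anc T hcvv
  obtain ⟨ru, hru⟩ := hpu
  obtain ⟨rv, hrv⟩ := hpv
  have hcu' : code T cu = code T w ++ gam T w cu := by
    have h1 : cu ≠ T.root := frChildren_ne_root T hcu
    have h2 : T.parent cu = w := ((mem_frChildren T).mp hcu).1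
    rw [code_of_ne_root T h1, h2]
  have hcv' : code T cv = code T w ++ gam T w cv := by
    have h1 : cv ≠ T.root := frChildren_ne_root T hcv
    have h2 : T.parent cv = w := ((mem_frChildren T).mp hcv).1
    rw [code_of_ne_root T h1, h2]
  intro hpre
  rw [← hru, ← hrv, hcu', hcv'] at hpre
  rw [List.append_assoc, List.append_assoc] at hpre
  rw [List.prefix_append_right_inj] at hpre
  have h1 : gam T w cu <+: gam T w cv ++ rv :=
    List.IsPrefix.trans (List.prefix_append _ _) hpre
  have h2 : gam T w cv <+: gam T w cv ++ rv := List.prefix_append _ _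
  rcases List.prefix_or_prefix_of_prefix h1 h2 with h | h
  · exact gam_incomp T hcu hcv hcne h
  · exact gam_incomp T hcv hcu (Ne.symm hcne) h

lemma code_prefix_iff {u v : V} : code T u <+: code T v ↔ frAncestor T u v := by
  constructor
  · intro hpre
    by_cases h1 : frAncestor T u v
    · exact h1
    · by_cases h2 : frAncestor T v u
      · have hne : v ≠ u := by
          intro he
          apply h1
          rw [← he]
          exact frAncestor_refl T v
        have := code_length_lt T h2 hne
        have := hpre.length_le
        omega
      · exact absurd hpre (code_incomp T h1 h2)
  · exact code_prefix_of_anc T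

lemma code_injective : Function.Injective (code T) := by
  intro u v h
  have h1 : frAncestor T u v := (code_prefix_iff T).mp (h ▸ List.prefix_refl _)
  have h2 : frAncestor T v u := (code_prefix_iff T).mp (h ▸ List.prefix_refl _)
  exact frAncestor_antisymm T h1 h2

/-- the depth/length accounting -/
lemma code_length_bound (v : V) :
    ∃ f : ℕ, (code T v).length ≤ frNodeDepth T v + 2 * f ∧
      tsize T v * 2 ^ f ≤ Fintype.card V := by
  have H : ∀ n : ℕ, ∀ v : V, frNodeDepth T v ≤ n →
      ∃ f : ℕ, (code T v).length ≤ frNodeDepth T v + 2 * f ∧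
        tsize T v * 2 ^ f ≤ Fintype.card V := by
    intro n
    induction n with
    | zero =>
      intro v hd
      have hv : v = T.root := by
        have h0 : frNodeDepth T v = 0 := by omega
        have := nodeDepth_spec T v
        rwa [h0] at this
      subst hv
      exact ⟨0, by simp [code_root], by simpa using tsize_le_card T T.root⟩
    | succ n ih =>
      intro v hd
      by_cases hv : v = T.root
      · subst hv
        exact ⟨0, by simp [code_root], by simpa using tsize_le_card T T.root⟩
      · have hp : frNodeDepth T (T.parent v) ≤ n := by
          have := nodeDepth_parent T hv
          omega
        obtain ⟨f, hf1, hf2⟩ := ih (T.parent v) hp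
        have hchild := self_mem_children_parent T hv
        have hw := gam_weight T hchild
        refine ⟨(gam T (T.parent v) v).length / 2 + f, ?_, ?_⟩
        · rw [code_of_ne_root T hv, List.length_append, nodeDepth_parent T hv]
          have : (gam T (T.parent v) v).length ≤ 2 * ((gam T (T.parent v) v).length / 2) + 1 := by
            omega
          omega
        · have h1 : tsize T v * 2 ^ ((gam T (T.parent v) v).length / 2) ≤ tsize T (T.parent v) := by
            have := tsize_pos T (T.parent v)
            omega
          calc tsize T v * 2 ^ ((gam T (T.parent v) v).length / 2 + f)
              = tsize T v * 2 ^ ((gam T (T.parent v) v).length / 2) * 2 ^ f := by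
                rw [pow_add]; ring
            _ ≤ tsize T (T.parent v) * 2 ^ f := Nat.mul_le_mul_right _ h1
            _ ≤ Fintype.card V := hf2
  exact H (frNodeDepth T v) v le_rfl

end Stmt2Aux

namespace Stmt2Aux
variable {V : Type} [Fintype V] [DecidableEq V] (T : FRTree V)

/-- the node set of the trie: all prefixes of codes -/
noncomputable def nodes : Finset (List Bool) :=
  Finset.univ.biUnion (fun v : V => ((code T v).inits).toFinset)

lemma mem_nodes {p : List Bool} : p ∈ nodes T ↔ ∃ v, p <+: code T v := by
  simp [nodes, List.mem_inits]

lemma code_mem_nodes (v : V) : code T v ∈ nodes T :=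
  (mem_nodes T).mpr ⟨v, List.prefix_refl _⟩

lemma nil_mem_nodes : [] ∈ nodes T :=
  (mem_nodes T).mpr ⟨T.root, List.nil_prefix⟩

lemma dropLast_mem_nodes {p : List Bool} (h : p ∈ nodes T) : p.dropLast ∈ nodes T := by
  rw [mem_nodes] at h ⊢
  obtain ⟨v, hv⟩ := h
  exact ⟨v, (List.dropLast_prefix p).trans hv⟩

noncomputable def trieParent : {p // p ∈ nodes T} → {p // p ∈ nodes T} :=
  fun p => ⟨p.1.dropLast, dropLast_mem_nodes T p.2⟩

lemma trieParent_iter_val (k : ℕ) (p : {p // p ∈ nodes T}) :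
    ((trieParent T)^[k] p).1 = (List.dropLast)^[k] p.1 := by
  induction k with
  | zero => rfl
  | succ k ih =>
    rw [Function.iterate_succ_apply', Function.iterate_succ_apply']
    rw [show ((trieParent T) ((trieParent T)^[k] p)).1
      = ((trieParent T)^[k] p).1.dropLast from rfl, ih]

lemma dropLast_iter {α : Type*} (k : ℕ) (l : List α) :
    (List.dropLast)^[k] l = l.take (l.length - k) := by
  induction k with
  | zero => simp
  | succ k ih =>
    rw [Function.iterate_succ_apply', ih, List.dropLast_eq_take, List.length_take,
      List.take_take]
    congr 1
    omega

noncomputable def trieTree : FRTree {p // p ∈ nodes T} where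
  root := ⟨[], nil_mem_nodes T⟩
  parent := trieParent T
  root_fixed := Subtype.ext (by simp [trieParent])
  reaches := fun p => ⟨p.1.length, Subtype.ext (by
    rw [trieParent_iter_val, dropLast_iter]; simp)⟩

@[simp] lemma trieTree_parent : (trieTree T).parent = trieParent T := rfl
@[simp] lemma trieTree_root : (trieTree T).root = ⟨[], nil_mem_nodes T⟩ := rfl

lemma trieNodeDepth (p : {p // p ∈ nodes T}) :
    frNodeDepth (trieTree T) p = p.1.length := by
  refine le_antisymm (nodeDepth_le _ (Subtype.ext (by
    show ((trieParent T)^[p.1.length] p).1 = []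
    rw [trieParent_iter_val, dropLast_iter]; simp))) ?_
  have hspec := nodeDepth_spec (trieTree T) p
  rw [trieTree_parent] at hspec
  have hval : ((trieParent T)^[frNodeDepth (trieTree T) p] p).1 = [] := by
    rw [hspec]; rfl
  rw [trieParent_iter_val, dropLast_iter] at hval
  have := congrArg List.length hval
  simp at this
  omega

lemma trieAnc (p q : {p // p ∈ nodes T}) :
    frAncestor (trieTree T) p q ↔ p.1 <+: q.1 := by
  constructor
  · intro ⟨k, hk⟩
    rw [trieTree_parent] at hk
    have hval : ((trieParent T)^[k] q).1 = p.1 := by rw [hk]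
    rw [trieParent_iter_val, dropLast_iter] at hval
    rw [← hval]
    exact List.take_prefix _ _
  · intro ⟨t, ht⟩
    refine ⟨q.1.length - p.1.length, Subtype.ext ?_⟩
    show (((trieTree T).parent)^[q.1.length - p.1.length] q).1 = p.1
    rw [trieTree_parent]
    rw [trieParent_iter_val, dropLast_iter]
    have hlen : p.1.length ≤ q.1.length := by
      rw [← ht]; simp
    have h1 : q.1.length - (q.1.length - p.1.length) = p.1.length := by omega
    rw [h1, ← ht, List.take_left]

lemma trieChildren_card (p : {p // p ∈ nodes T}) :
    (frChildren (trieTree T) p).card ≤ 2 := by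
  classical
  have h2 : (Finset.univ : Finset Bool).card = 2 := by simp
  rw [← h2]
  refine Finset.card_le_card_of_injOn (fun q => q.1.getLastD false)
    (fun _ _ => Finset.mem_univ _) ?_
  intro q1 hq1 q2 hq2 heq
  simp only [Finset.mem_coe, mem_frChildren] at hq1 hq2
  have hv1 : q1.1.dropLast = p.1 := congrArg Subtype.val hq1.1
  have hv2 : q2.1.dropLast = p.1 := congrArg Subtype.val hq2.1
  have hne1 : q1.1 ≠ [] := by
    intro he
    have hp : p.1 = [] := by rw [← hv1, he]; rfl
    exact hq1.2 (Subtype.ext (by rw [he, hp]))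
  have hne2 : q2.1 ≠ [] := by
    intro he
    have hp : p.1 = [] := by rw [← hv2, he]; rfl
    exact hq2.2 (Subtype.ext (by rw [he, hp]))
  obtain ⟨b1, e1⟩ : ∃ b, q1.1 = p.1 ++ [b] :=
    ⟨q1.1.getLast hne1, by rw [← hv1]; exact (List.dropLast_append_getLast hne1).symm⟩
  obtain ⟨b2, e2⟩ : ∃ b, q2.1 = p.1 ++ [b] :=
    ⟨q2.1.getLast hne2, by rw [← hv2]; exact (List.dropLast_append_getLast hne2).symm⟩
  simp only at heq
  rw [e1, e2, List.getLastD_concat, List.getLastD_concat] at heq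
  subst heq
  exact Subtype.ext (by rw [e1, e2])

/-- an extension of a proper prefix of a code is still in the node set -/
lemma proper_prefix_extension {p c : List Bool} (h : p <+: c) (hne : p ≠ c) :
    ∃ b t, c = p ++ b :: t := by
  obtain ⟨t, ht⟩ := h
  cases t with
  | nil => exact absurd (by rw [← ht]; simp) hne
  | cons b t => exact ⟨b, t, ht.symm⟩

lemma trieLeaf_iff (p : {p // p ∈ nodes T}) :
    frIsLeaf (trieTree T) p ↔ ∃ v : V, frIsLeaf T v ∧ code T v = p.1 := by
  constructor
  · intro hleaf
    obtain ⟨v0, hv0⟩ := (mem_nodes T).mp p.2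
    have hpc : p.1 = code T v0 := by
      by_contra hne
      obtain ⟨b, t, hbt⟩ := proper_prefix_extension hv0 hne
      have hqmem : p.1 ++ [b] ∈ nodes T := by
        rw [mem_nodes]
        exact ⟨v0, ⟨t, by rw [hbt]; simp⟩⟩
      have hq := hleaf ⟨p.1 ++ [b], hqmem⟩ (Subtype.ext (by
        show (p.1 ++ [b]).dropLast = p.1
        exact List.dropLast_concat))
      have := congrArg (fun q : {p // p ∈ nodes T} => q.1.length) hq
      simp at this
    refine ⟨v0, ?_, hpc.symm⟩
    intro u hu
    by_contra hune
    have huc : u ∈ frChildren T v0 := (mem_frChildren T).mpr ⟨hu, hune⟩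
    have hcode : code T u = code T v0 ++ gam T v0 u := by
      rw [code_of_ne_root T (frChildren_ne_root T huc), hu]
    have hgne : gam T v0 u ≠ [] := gam_ne_nil T huc
    obtain ⟨b, t, hbt⟩ : ∃ b t, gam T v0 u = b :: t := by
      cases hg : gam T v0 u with
      | nil => exact absurd hg hgne
      | cons b t => exact ⟨b, t, rfl⟩
    have hqmem : p.1 ++ [b] ∈ nodes T := by
      rw [mem_nodes]
      refine ⟨u, ⟨t, ?_⟩⟩
      rw [hcode, hbt, hpc]
      simp
    have hq := hleaf ⟨p.1 ++ [b], hqmem⟩ (Subtype.ext (by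
      show (p.1 ++ [b]).dropLast = p.1
      exact List.dropLast_concat))
    have := congrArg (fun q : {p // p ∈ nodes T} => q.1.length) hq
    simp at this
  · intro ⟨v, hvleaf, hvp⟩
    intro q hq
    have hval : q.1.dropLast = p.1 := congrArg Subtype.val hq
    by_cases hqnil : q.1 = []
    · refine Subtype.ext ?_
      rw [hqnil, ← hval, hqnil]
      rfl
    · exfalso
      obtain ⟨u, hu⟩ := (mem_nodes T).mp q.2
      have h1 : code T v <+: code T u := by
        rw [hvp, ← hval]
        exact (List.dropLast_prefix _).trans hu
      have h2 : u = v := frIsLeaf_anc T hvleaf ((code_prefix_iff T).mp h1)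
      subst h2
      have h3 := hu.length_le
      have h4 : (q.1.dropLast).length = q.1.length - 1 := by
        rw [List.dropLast_eq_take, List.length_take]
        simp
      have h5 : q.1.length ≥ 1 := by
        cases hq1 : q.1 with
        | nil => exact absurd hq1 hqnil
        | cons a l => simp
      rw [hvp, ← hval] at h3
      omega

section MapTree
variable {A B : Type} [Fintype A] [DecidableEq A] [Fintype B] [DecidableEq B]

lemma conj_iter (e : A ≃ B) (f : A → A) (k : ℕ) (b : B) :
    (fun x => e (f (e.symm x)))^[k] b = e (f^[k] (e.symm b)) := by
  induction k with
  | zero => simp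
  | succ k ih =>
    rw [Function.iterate_succ_apply', Function.iterate_succ_apply', ih]
    simp

/-- transport a tree along an equivalence -/
def mapTree (e : A ≃ B) (S : FRTree A) : FRTree B where
  root := e S.root
  parent := fun x => e (S.parent (e.symm x))
  root_fixed := by simp [S.root_fixed]
  reaches := by
    intro b
    obtain ⟨k, hk⟩ := S.reaches (e.symm b)
    exact ⟨k, by rw [conj_iter, hk]⟩

lemma mapTree_anc (e : A ≃ B) (S : FRTree A) (a a' : A) :
    frAncestor (mapTree e S) (e a) (e a') ↔ frAncestor S a a' := by
  constructor
  · intro ⟨k, hk⟩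
    rw [show (mapTree e S).parent = fun x => e (S.parent (e.symm x)) from rfl] at hk
    rw [conj_iter] at hk
    simp at hk
    exact ⟨k, hk⟩
  · intro ⟨k, hk⟩
    refine ⟨k, ?_⟩
    rw [show (mapTree e S).parent = fun x => e (S.parent (e.symm x)) from rfl, conj_iter]
    simp [hk]

lemma mapTree_nodeDepth (e : A ≃ B) (S : FRTree A) (b : B) :
    frNodeDepth (mapTree e S) b = frNodeDepth S (e.symm b) := by
  refine le_antisymm ?_ ?_
  · refine nodeDepth_le _ ?_
    rw [show (mapTree e S).parent = fun x => e (S.parent (e.symm x)) from rfl, conj_iter]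
    rw [nodeDepth_spec S (e.symm b)]
    rfl
  · refine nodeDepth_le _ ?_
    have hspec := nodeDepth_spec (mapTree e S) b
    rw [show (mapTree e S).parent = fun x => e (S.parent (e.symm x)) from rfl, conj_iter] at hspec
    have : S.parent^[frNodeDepth (mapTree e S) b] (e.symm b) = e.symm ((mapTree e S).root) := by
      rw [← hspec]; simp
    rw [this]
    simp [mapTree]

lemma mapTree_depth (e : A ≃ B) (S : FRTree A) : frDepth (mapTree e S) = frDepth S := by
  refine le_antisymm ?_ ?_
  · refine Finset.sup_le ?_
    intro b _
    rw [mapTree_nodeDepth]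
    exact Finset.le_sup (Finset.mem_univ _)
  · refine Finset.sup_le ?_
    intro a _
    have : frNodeDepth S a = frNodeDepth (mapTree e S) (e a) := by
      rw [mapTree_nodeDepth]; simp
    rw [this]
    exact Finset.le_sup (Finset.mem_univ _)

lemma mapTree_leaf (e : A ≃ B) (S : FRTree A) (b : B) :
    frIsLeaf (mapTree e S) b ↔ frIsLeaf S (e.symm b) := by
  constructor
  · intro h a ha
    have := h (e a) (by
      rw [show (mapTree e S).parent = fun x => e (S.parent (e.symm x)) from rfl]
      simp [ha])
    rw [← Equiv.symm_apply_apply e a, this]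
  · intro h u hu
    rw [show (mapTree e S).parent = fun x => e (S.parent (e.symm x)) from rfl] at hu
    have h1 : S.parent (e.symm u) = e.symm b := by
      rw [← hu]; simp
    have := h (e.symm u) h1
    calc u = e (e.symm u) := by simp
    _ = e (e.symm b) := by rw [this]
    _ = b := by simp

lemma mapTree_children (e : A ≃ B) (S : FRTree A) (b : B) :
    frChildren (mapTree e S) b = (frChildren S (e.symm b)).image e := by
  ext q
  rw [mem_frChildren, Finset.mem_image]
  constructor
  · intro ⟨h1, h2⟩
    refine ⟨e.symm q, ?_, by simp⟩
    rw [mem_frChildren]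
    constructor
    · rw [show (mapTree e S).parent = fun x => e (S.parent (e.symm x)) from rfl] at h1
      simp only at h1
      rw [← h1]; simp
    · intro he
      exact h2 (by rw [← Equiv.apply_symm_apply e q, he]; simp)
  · intro ⟨a, ha, hq⟩
    rw [mem_frChildren] at ha
    subst hq
    constructor
    · rw [show (mapTree e S).parent = fun x => e (S.parent (e.symm x)) from rfl]
      simp [ha.1]
    · intro he
      exact ha.2 (by rw [← Equiv.symm_apply_apply e a, he])

end MapTree
end Stmt2Aux


open Stmt2Aux in
/-- Any rooted tree `T` with `n` nodes can be transformed into a binary tree `T'`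
(every node has at most two frChildren) whose leaves are exactly the (images of the)
leaves of `T`, such that two original nodes are in frAncestor–descendant relation in `T'`
iff they are in that relation in `T`, and `depth(T') ≤ 2·(depth(T) + log₂ n)`. -/
theorem stmt2 (T : FRTree V) :
    ∃ (m : ℕ) (T' : FRTree (Fin m)) (ι : V ↪ Fin m),
      (∀ w : Fin m, (frChildren T' w).card ≤ 2) ∧
      (∀ w : Fin m, frIsLeaf T' w ↔ ∃ v : V, frIsLeaf T v ∧ ι v = w) ∧
      (∀ u v : V, frAncestor T u v ↔ frAncestor T' (ι u) (ι v)) ∧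
      (frDepth T' : ℝ) ≤ 2 * ((frDepth T : ℝ) + Real.logb 2 (Fintype.card V)) := by
  classical
  set S := trieTree T with hS
  set e := (nodes T).equivFin with he
  refine ⟨(nodes T).card, mapTree e S,
    ⟨fun v => e ⟨code T v, code_mem_nodes T v⟩, ?_⟩, ?_, ?_, ?_, ?_⟩
  · -- injectivity
    intro u v h
    have h1 := e.injective h
    have h2 : code T u = code T v := congrArg Subtype.val h1
    exact code_injective T h2
  · -- children card
    intro w
    rw [mapTree_children]
    exact le_trans Finset.card_image_le (trieChildren_card T _)
  · -- leaves
    intro w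
    rw [mapTree_leaf, trieLeaf_iff]
    constructor
    · intro ⟨v, hv, hcode⟩
      refine ⟨v, hv, ?_⟩
      show e ⟨code T v, code_mem_nodes T v⟩ = w
      rw [← Equiv.apply_symm_apply e w]
      congr 1
      exact Subtype.ext hcode
    · intro ⟨v, hv, hcode⟩
      refine ⟨v, hv, ?_⟩
      have : (⟨code T v, code_mem_nodes T v⟩ : {p // p ∈ nodes T}) = e.symm w := by
        rw [Equiv.eq_symm_apply]
        exact hcode
      exact congrArg Subtype.val this
  · -- ancestors
    intro u v
    rw [← code_prefix_iff T, ← trieAnc T ⟨code T u, code_mem_nodes T u⟩ ⟨code T v, code_mem_nodes T v⟩]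
    exact (mapTree_anc e S _ _).symm
  · -- depth
    rw [mapTree_depth]
    obtain ⟨p0, -, hsup⟩ := Finset.exists_mem_eq_sup (Finset.univ : Finset {p // p ∈ nodes T})
      ⟨⟨[], nil_mem_nodes T⟩, Finset.mem_univ _⟩ (frNodeDepth S)
    have hdS : frDepth S = p0.1.length := by
      rw [frDepth, hsup, hS, trieNodeDepth]
    obtain ⟨v, hv⟩ := (mem_nodes T).mp p0.2
    have hlen : p0.1.length ≤ (code T v).length := hv.length_le
    obtain ⟨f, hf1, hf2⟩ := code_length_bound T v
    have hdv : frNodeDepth T v ≤ frDepth T := Finset.le_sup (Finset.mem_univ v)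
    have hn1 : 1 ≤ Fintype.card V := Fintype.card_pos_iff.mpr ⟨T.root⟩
    have h2f : 2 ^ f ≤ Fintype.card V := by
      have := tsize_pos T v
      nlinarith [hf2]
    have hfr : (f : ℝ) ≤ Real.logb 2 (Fintype.card V) := by
      have h1 : ((2:ℝ)) ^ f ≤ (Fintype.card V : ℝ) := by exact_mod_cast h2f
      have h3 := (Real.logb_le_logb (by norm_num : (1:ℝ) < 2)
        (by positivity) (by exact_mod_cast hn1 : (0:ℝ) < Fintype.card V)).mpr h1
      rwa [Real.logb_pow, Real.logb_self_eq_one (by norm_num), mul_one] at h3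
    have hlog0 : 0 ≤ Real.logb 2 (Fintype.card V) :=
      Real.logb_nonneg (by norm_num) (by exact_mod_cast hn1)
    have c1 : p0.1.length ≤ frDepth T + 2 * f := by omega
    rw [hdS]
    have c2 : ((p0.1.length : ℕ) : ℝ) ≤ ((frDepth T + 2 * f : ℕ) : ℝ) := Nat.cast_le.mpr c1
    push_cast at c2
    linarith
end

section
/- Let P be a convex polygon with diameter realized by points v₁, v₂ ∈ P, and for z ∈ [0, diam(P)] let f(z) denote the length of the intersection of P with the line normal to v₁v₂ at distance z from v₁. Then area(P) ≥ (max_z f(z)) · diam(P) / 2. -/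
open MeasureTheory Real RealInnerProductSpace

private lemma aux_exists_dist_eq_diam {X : Type*} [PseudoMetricSpace X] {S : Set X}
    (hS : IsCompact S) (hne : S.Nonempty) :
    ∃ a ∈ S, ∃ b ∈ S, dist a b = Metric.diam S := by
  obtain ⟨p, hp, hmax⟩ := (hS.prod hS).exists_isMaxOn (hne.prod hne)
    (continuous_dist.continuousOn)
  refine ⟨p.1, hp.1, p.2, hp.2, le_antisymm
    (Metric.dist_le_diam_of_mem hS.isBounded hp.1 hp.2) ?_⟩
  exact Metric.diam_le_of_forall_dist_le dist_nonneg fun x hx y hy =>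
    hmax (Set.mk_mem_prod hx hy)

private lemma aux1 (A B : ℝ) (hB : B ≠ 0) : A / B * ((B ^ 2 - 0 ^ 2) / 2) = A * B / 2 := by
  field_simp
  ring

private lemma aux2 (A B : ℝ) (hB : B ≠ 0) : A / B * ((B - 0) ^ 2 / 2) = A * B / 2 := by
  field_simp
  ring

private lemma aux2' (A B : ℝ) (hB : B ≠ 0) : A / B * (B ^ 2 / 2) = A * B / 2 := by
  field_simp

private lemma aux3 (d z s : ℝ) (h : d - z ≠ 0) :
    (1 - (d - s) / (d - z)) * d + (d - s) / (d - z) * z = s := by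
  field_simp
  ring

set_option maxHeartbeats 1000000 in
/-- Let `P ⊂ ℝ²` be a compact convex polygonal region whose diameter is realized by
`v₁, v₂ ∈ P`, and for `z` let `f z` be the length of the intersection of `P` with the line
normal to `v₁v₂` at (signed) distance `z` from `v₁` (a segment, so its length is its
diameter). Then `area(P) ≥ f z · diam(P) / 2` for every `z ∈ [0, diam(P)]`. -/
theorem stmt10 (P : Set (EuclideanSpace ℝ (Fin 2)))
    (hconv : Convex ℝ P) (hcomp : IsCompact P)
    (v₁ v₂ : EuclideanSpace ℝ (Fin 2)) (h₁ : v₁ ∈ P) (h₂ : v₂ ∈ P) (hne : v₁ ≠ v₂)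
    (hdiam : dist v₁ v₂ = Metric.diam P)
    (f : ℝ → ℝ)
    (hf : ∀ z, f z =
      Metric.diam {x | x ∈ P ∧ ⟪x - v₁, (dist v₁ v₂)⁻¹ • (v₂ - v₁)⟫ = z}) :
    ∀ z ∈ Set.Icc 0 (Metric.diam P),
      f z * Metric.diam P / 2 ≤ (volume P).toReal := by
  intro z hz
  set d : ℝ := dist v₁ v₂ with hdd
  have hd : 0 < d := dist_pos.2 hne
  rw [← hdiam] at hz ⊢
  rcases le_or_gt (f z) 0 with hfz | hfpos
  · have h0 : f z * d / 2 ≤ 0 := by nlinarith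
    exact h0.trans ENNReal.toReal_nonneg
  set u : EuclideanSpace ℝ (Fin 2) := d⁻¹ • (v₂ - v₁) with hu_def
  have hnorm_vv : ‖v₂ - v₁‖ = d := by rw [← dist_eq_norm, dist_comm]
  have hu_norm : ‖u‖ = 1 := by
    rw [hu_def, norm_smul, hnorm_vv, norm_inv, Real.norm_eq_abs, abs_of_pos hd,
      inv_mul_cancel₀ hd.ne']
  -- an orthonormal basis with first vector u
  have hcard : Module.finrank ℝ (EuclideanSpace ℝ (Fin 2)) = Fintype.card (Fin 2) := by simp
  have horth : Orthonormal ℝ (({0} : Set (Fin 2)).restrict ![u, u]) := by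
    constructor
    · intro i
      have hi : (i : Fin 2) = 0 := i.2
      simp [Set.restrict, hi, hu_norm]
    · intro i j hij
      exact absurd (Subtype.ext ((Set.mem_singleton_iff.1 i.2).trans
        (Set.mem_singleton_iff.1 j.2).symm)) hij
  obtain ⟨bb, hbb⟩ := horth.exists_orthonormalBasis_extension_of_card_eq hcard
  have hb0 : bb 0 = u := (hbb 0 rfl).trans (by simp)
  set w : EuclideanSpace ℝ (Fin 2) := bb 1 with hw_def
  have huw : ⟪u, w⟫ = 0 := by
    rw [← hb0]; exact bb.orthonormal.2 (by decide : (0 : Fin 2) ≠ 1)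
  have hnorm2 : ∀ x : EuclideanSpace ℝ (Fin 2), ‖x‖ ^ 2 = ⟪u, x⟫ ^ 2 + ⟪w, x⟫ ^ 2 := by
    intro x
    rw [← bb.repr.norm_map x, EuclideanSpace.norm_eq, Real.sq_sqrt (by positivity)]
    simp [Fin.sum_univ_two, OrthonormalBasis.repr_apply_apply, sq_abs, hb0]
    rfl
  have huv : ⟪u, v₂ - v₁⟫ = d := by
    rw [hu_def, real_inner_smul_left, real_inner_self_eq_norm_sq, hnorm_vv]
    field_simp
  have hdu : v₂ - v₁ = d • u := by
    rw [hu_def, smul_smul, mul_inv_cancel₀ hd.ne', one_smul]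
  have hwv : ⟪w, v₂ - v₁⟫ = 0 := by
    rw [hdu, real_inner_smul_right, real_inner_comm, huw, mul_zero]
  -- the slice S
  set S : Set (EuclideanSpace ℝ (Fin 2)) := {x | x ∈ P ∧ ⟪x - v₁, u⟫ = z} with hS_def
  have hfS : f z = Metric.diam S := hf z
  have hmem : ∀ x ∈ S, x ∈ P ∧ ⟪u, x - v₁⟫ = z := fun x hx =>
    ⟨hx.1, by rw [real_inner_comm]; exact hx.2⟩
  have hScomp : IsCompact S := by
    have hc : Continuous fun x : EuclideanSpace ℝ (Fin 2) => ⟪x - v₁, u⟫ :=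
      Continuous.inner (continuous_id.sub continuous_const) continuous_const
    exact hcomp.inter_right (isClosed_eq hc continuous_const)
  have hx₀ : v₁ + (z / d) • (v₂ - v₁) ∈ S := by
    constructor
    · have heq : (1 - z / d) • v₁ + (z / d) • v₂ = v₁ + (z / d) • (v₂ - v₁) := by
        rw [smul_sub, sub_smul, one_smul]; abel
      rw [← heq]
      refine hconv h₁ h₂ (by
        have := hz.2
        have h1 : z / d ≤ 1 := by rw [div_le_one hd]; exact hz.2
        linarith) (div_nonneg hz.1 hd.le) (by ring)
    · show ⟪v₁ + (z / d) • (v₂ - v₁) - v₁, u⟫ = z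
      rw [add_sub_cancel_left, real_inner_smul_left, real_inner_comm, huv]
      exact div_mul_cancel₀ z hd.ne'
  obtain ⟨a, ha, c, hc, hac⟩ := aux_exists_dist_eq_diam hScomp ⟨_, hx₀⟩
  set α : ℝ := ⟪w, a - v₁⟫ with hα_def
  set β : ℝ := ⟪w, c - v₁⟫ with hβ_def
  have hgen : ∀ x ∈ S, ∀ y ∈ S, dist x y = |⟪w, x - v₁⟫ - ⟪w, y - v₁⟫| := by
    intro x hx y hy
    have h1 : x - y = (x - v₁) - (y - v₁) := by abel
    have hu0 : ⟪u, (x - v₁) - (y - v₁)⟫ = 0 := by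
      rw [inner_sub_right, (hmem x hx).2, (hmem y hy).2, sub_self]
    have hw0 : ⟪w, (x - v₁) - (y - v₁)⟫ = ⟪w, x - v₁⟫ - ⟪w, y - v₁⟫ := inner_sub_right _ _ _
    rw [dist_eq_norm, ← Real.sqrt_sq (norm_nonneg (x - y)), hnorm2, h1, hu0, hw0]
    simp [Real.sqrt_sq_eq_abs]
  have hfab : f z = |α - β| := by rw [hfS, ← hac, hgen a ha c hc]
  -- endpoint exclusion
  have key0 : z = 0 → ∀ x ∈ S, ⟪w, x - v₁⟫ = 0 := by
    intro hz0 x hx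
    have hd2 : dist x v₂ ≤ d := by
      rw [hdiam]; exact Metric.dist_le_diam_of_mem hcomp.isBounded (hmem x hx).1 h₂
    have hsplit : x - v₂ = (x - v₁) - (v₂ - v₁) := by abel
    have e1 : ⟪u, x - v₂⟫ = -d := by
      rw [hsplit, inner_sub_right, (hmem x hx).2, huv, hz0, zero_sub]
    have e2 : ⟪w, x - v₂⟫ = ⟪w, x - v₁⟫ := by
      rw [hsplit, inner_sub_right, hwv, sub_zero]
    have e3 : d ^ 2 + ⟪w, x - v₂⟫ ^ 2 ≤ d ^ 2 := by
      calc d ^ 2 + ⟪w, x - v₂⟫ ^ 2 = ⟪u, x - v₂⟫ ^ 2 + ⟪w, x - v₂⟫ ^ 2 := by rw [e1]; ring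
        _ = ‖x - v₂‖ ^ 2 := (hnorm2 _).symm
        _ = dist x v₂ ^ 2 := by rw [dist_eq_norm]
        _ ≤ d ^ 2 := pow_le_pow_left₀ dist_nonneg hd2 2
    have e4 : ⟪w, x - v₂⟫ = 0 := by
      have h5 : (⟪w, x - v₂⟫ : ℝ) ^ 2 = 0 := le_antisymm (by linarith) (sq_nonneg _)
      exact pow_eq_zero_iff two_ne_zero |>.1 h5
    rw [← e2, e4]
  have keyd : z = d → ∀ x ∈ S, ⟪w, x - v₁⟫ = 0 := by
    intro hzd x hx
    have hd2 : dist x v₁ ≤ d := by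
      rw [hdiam]; exact Metric.dist_le_diam_of_mem hcomp.isBounded (hmem x hx).1 h₁
    have e3 : d ^ 2 + ⟪w, x - v₁⟫ ^ 2 ≤ d ^ 2 := by
      calc d ^ 2 + ⟪w, x - v₁⟫ ^ 2 = ⟪u, x - v₁⟫ ^ 2 + ⟪w, x - v₁⟫ ^ 2 := by
            rw [(hmem x hx).2, hzd]
        _ = ‖x - v₁‖ ^ 2 := (hnorm2 _).symm
        _ = dist x v₁ ^ 2 := by rw [dist_eq_norm]
        _ ≤ d ^ 2 := pow_le_pow_left₀ dist_nonneg hd2 2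
    have h5 : (⟪w, x - v₁⟫ : ℝ) ^ 2 = 0 := le_antisymm (by linarith) (sq_nonneg _)
    exact pow_eq_zero_iff two_ne_zero |>.1 h5
  have hz0 : 0 < z := by
    rcases hz.1.eq_or_lt with h | h
    · exfalso
      have hα0 : α = 0 := key0 h.symm a ha
      have hβ0 : β = 0 := key0 h.symm c hc
      rw [hfab, hα0, hβ0, sub_self, abs_zero] at hfpos
      exact lt_irrefl 0 hfpos
    · exact h
  have hzd : z < d := by
    rcases hz.2.lt_or_eq with h | h
    · exact h
    · exfalso
      have hα0 : α = 0 := keyd h a ha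
      have hβ0 : β = 0 := keyd h c hc
      rw [hfab, hα0, hβ0, sub_self, abs_zero] at hfpos
      exact lt_irrefl 0 hfpos
  -- the measure-preserving coordinate map
  set Φ : EuclideanSpace ℝ (Fin 2) → ℝ × ℝ := fun x =>
    MeasurableEquiv.finTwoArrow ((MeasurableEquiv.toLp 2 (Fin 2 → ℝ)).symm (bb.repr (x - v₁)))
    with hΦdef
  have hΦval : ∀ x, Φ x = (⟪u, x - v₁⟫, ⟪w, x - v₁⟫) := by
    intro x
    rw [hΦdef]
    simp only [MeasurableEquiv.finTwoArrow, MeasurableEquiv.piFinTwo,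
      MeasurableEquiv.coe_toLp_symm, MeasurableEquiv.coe_mk, Equiv.coe_fn_mk,
      piFinTwoEquiv_apply, OrthonormalBasis.repr_apply_apply, hb0,
      ← hw_def, Prod.mk.injEq]
  have hΦmp : MeasurePreserving Φ volume volume :=
    ((volume_preserving_finTwoArrow ℝ).comp
      ((EuclideanSpace.volume_preserving_symm_measurableEquiv_toLp (Fin 2)).comp
        (bb.measurePreserving_repr.comp (measurePreserving_sub_right volume v₁))))
  have hΦcont : Continuous Φ := by
    have hrw : Φ = fun x => ((⟪u, x - v₁⟫ : ℝ), (⟪w, x - v₁⟫ : ℝ)) := funext hΦval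
    rw [hrw]
    exact Continuous.prodMk
      (Continuous.inner continuous_const (continuous_id.sub continuous_const))
      (Continuous.inner continuous_const (continuous_id.sub continuous_const))
  have hΦinj : Function.Injective Φ := by
    intro x y hxy
    rw [hΦval, hΦval, Prod.mk.injEq] at hxy
    have h1 : x - y = (x - v₁) - (y - v₁) := by abel
    have h2 : ‖x - y‖ ^ 2 = 0 := by
      have hu0 : ⟪u, (x - v₁) - (y - v₁)⟫ = 0 := by
        rw [inner_sub_right, hxy.1, sub_self]
      have hw0 : ⟪w, (x - v₁) - (y - v₁)⟫ = 0 := by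
        rw [inner_sub_right, hxy.2, sub_self]
      rw [hnorm2, h1, hu0, hw0]
      ring
    have h3 : ‖x - y‖ = 0 := pow_eq_zero_iff two_ne_zero |>.1 h2
    exact sub_eq_zero.1 (norm_eq_zero.1 h3)
  set Q : Set (ℝ × ℝ) := Φ '' P with hQdef
  have hQm : MeasurableSet Q := (hcomp.image hΦcont).isClosed.measurableSet
  have hPQ : volume P = volume Q := by
    conv_lhs => rw [← Set.preimage_image_eq P hΦinj]
    exact hΦmp.measure_preimage hQm.nullMeasurableSet
  -- affinity of Φ
  have hΦaff : ∀ (κ μ' : ℝ), κ + μ' = 1 → ∀ x y, Φ (κ • x + μ' • y) =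
      (κ * (Φ x).1 + μ' * (Φ y).1, κ * (Φ x).2 + μ' * (Φ y).2) := by
    intro κ μ' hκμ x y
    have h1 : κ • x + μ' • y - v₁ = κ • (x - v₁) + μ' • (y - v₁) := by
      rw [smul_sub, smul_sub, sub_add_sub_comm, ← add_smul, hκμ, one_smul]
    rw [hΦval, hΦval, hΦval, h1, Prod.mk.injEq]
    constructor <;> rw [inner_add_right, real_inner_smul_right, real_inner_smul_right]
  -- slice lower bound
  set g : ℝ → ℝ := fun s =>
    if s ≤ z then s / z * f z else (d - s) / (d - z) * f z with hg_def
  have hslice : ∀ s ∈ Set.Icc (0 : ℝ) d,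
      ENNReal.ofReal (g s) ≤ volume {t : ℝ | (s, t) ∈ Q} := by
    intro s hs
    have main : ∀ (lam : ℝ) (p : EuclideanSpace ℝ (Fin 2)), 0 ≤ lam → lam ≤ 1 → p ∈ P →
        (Φ p).2 = 0 → (1 - lam) * (Φ p).1 + lam * z = s →
        ENNReal.ofReal (lam * f z) ≤ volume {t : ℝ | (s, t) ∈ Q} := by
      intro lam p hl0 hl1 hp hpw hps
      have hmk : ∀ x ∈ S, lam * ⟪w, x - v₁⟫ ∈ {t : ℝ | (s, t) ∈ Q} := by
        intro x hx
        refine ⟨(1 - lam) • p + lam • x,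
          hconv hp (hmem x hx).1 (by linarith) hl0 (by ring), ?_⟩
        rw [hΦaff (1 - lam) lam (by ring) p x]
        have hx1 : (Φ x).1 = z := by rw [hΦval]; exact (hmem x hx).2
        have hx2 : (Φ x).2 = ⟪w, x - v₁⟫ := by rw [hΦval]
        rw [Prod.mk.injEq]
        constructor
        · rw [hx1]; exact hps
        · rw [hx2, hpw]; ring
      have hconvT : Convex ℝ {t : ℝ | (s, t) ∈ Q} := by
        intro t₁ ht₁ t₂ ht₂ κ μ' hκ hμ hsum
        obtain ⟨x₁, hx₁, hΦ₁⟩ := ht₁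
        obtain ⟨x₂, hx₂, hΦ₂⟩ := ht₂
        refine ⟨κ • x₁ + μ' • x₂, hconv hx₁ hx₂ hκ hμ hsum, ?_⟩
        rw [hΦaff κ μ' hsum, hΦ₁, hΦ₂]
        rw [Prod.mk.injEq]
        constructor
        · show κ * s + μ' * s = s
          rw [← add_mul, hsum, one_mul]
        · rfl
      have hsub : Set.uIcc (lam * α) (lam * β) ⊆ {t : ℝ | (s, t) ∈ Q} :=
        hconvT.ordConnected.uIcc_subset (hmk a ha) (hmk c hc)
      calc ENNReal.ofReal (lam * f z)
          = volume (Set.uIcc (lam * α) (lam * β)) := by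
            rw [Set.uIcc, Real.volume_Icc]
            congr 1
            rw [max_sub_min_eq_abs, ← mul_sub, abs_mul, abs_of_nonneg hl0, hfab, abs_sub_comm]
        _ ≤ volume {t : ℝ | (s, t) ∈ Q} := measure_mono hsub
    rcases le_or_gt s z with hsz | hsz
    · have hgs : g s = s / z * f z := by rw [hg_def]; simp [hsz]
      rw [hgs]
      refine main (s / z) v₁ (div_nonneg hs.1 hz0.le) ((div_le_one hz0).2 hsz) h₁ ?_ ?_
      · rw [hΦval]; simp
      · rw [hΦval]
        simp only [sub_self, inner_zero_right]
        rw [mul_zero, zero_add, div_mul_cancel₀ s hz0.ne']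
    · have hgs : g s = (d - s) / (d - z) * f z := by rw [hg_def]; simp [not_le.2 hsz]
      rw [hgs]
      have hdz : (0 : ℝ) < d - z := by linarith
      refine main ((d - s) / (d - z)) v₂ (div_nonneg (by linarith [hs.2]) hdz.le)
        ((div_le_one hdz).2 (by linarith)) h₂ ?_ ?_
      · rw [hΦval]; exact hwv
      · rw [hΦval]
        show (1 - (d - s) / (d - z)) * ⟪u, v₂ - v₁⟫ + (d - s) / (d - z) * z = s
        rw [huv]
        exact aux3 d z s (sub_ne_zero.2 hzd.ne')
  -- Fubini
  have hQ1 : volume Q = ∫⁻ s, volume {t : ℝ | (s, t) ∈ Q} := by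
    rw [Measure.volume_eq_prod, Measure.prod_apply hQm]
    rfl
  -- continuity, integrability, nonnegativity of g
  have hgc : Continuous g := by
    rw [hg_def]
    apply Continuous.if_le
    · exact (continuous_id.div_const z).mul continuous_const
    · exact ((continuous_const.sub continuous_id).div_const (d - z)).mul continuous_const
    · exact continuous_id
    · exact continuous_const
    · intro x hx
      rw [hx, div_self hz0.ne', div_self (sub_ne_zero.2 hzd.ne')]
  have hint : IntegrableOn g (Set.Icc 0 d) volume := hgc.integrableOn_Icc
  have hnn : 0 ≤ᵐ[volume.restrict (Set.Icc 0 d)] g := by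
    refine (ae_restrict_iff' measurableSet_Icc).2 (Filter.Eventually.of_forall ?_)
    intro x hx
    rw [hg_def]
    by_cases hxz : x ≤ z
    · simp only [hxz, if_true]
      exact mul_nonneg (div_nonneg hx.1 hz0.le) hfpos.le
    · simp only [hxz, if_false]
      exact mul_nonneg (div_nonneg (by linarith [hx.2]) (by linarith)) hfpos.le
  -- the integral computation
  have hIcc : ∫ s in Set.Icc 0 d, g s = f z * d / 2 := by
    rw [MeasureTheory.integral_Icc_eq_integral_Ioc, ← intervalIntegral.integral_of_le hd.le,
      ← intervalIntegral.integral_add_adjacent_intervals (b := z)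
        (hgc.intervalIntegrable 0 z) (hgc.intervalIntegrable z d)]
    have e1 : ∫ s in (0 : ℝ)..z, g s = f z * z / 2 := by
      have heq : Set.EqOn g (fun s => f z / z * s) (Set.uIcc 0 z) := by
        intro x hx
        rw [Set.uIcc_of_le hz0.le] at hx
        rw [hg_def]
        simp only [hx.2, if_true]
        ring
      rw [intervalIntegral.integral_congr heq, intervalIntegral.integral_const_mul, integral_id]
      exact aux1 (f z) z hz0.ne'
    have e2 : ∫ s in z..d, g s = f z * (d - z) / 2 := by
      have heq : Set.EqOn g (fun s => f z / (d - z) * (d - s)) (Set.uIcc z d) := by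
        intro x hx
        rw [Set.uIcc_of_le hzd.le] at hx
        rw [hg_def]
        by_cases hxz : x ≤ z
        · have hxe : x = z := le_antisymm hxz hx.1
          subst hxe
          simp only [le_refl, if_true]
          rw [div_self hz0.ne', one_mul, div_mul_cancel₀ _ (sub_ne_zero.2 hzd.ne')]
        · simp only [hxz, if_false]
          ring
      rw [intervalIntegral.integral_congr heq, intervalIntegral.integral_const_mul]
      have e3 : ∫ s in z..d, (d - s) = (d - z) ^ 2 / 2 := by
        rw [intervalIntegral.integral_sub intervalIntegrable_const
          intervalIntegral.intervalIntegrable_id, intervalIntegral.integral_const, integral_id]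
        simp only [smul_eq_mul]
        ring
      rw [e3]
      exact aux2' (f z) (d - z) (sub_ne_zero.2 hzd.ne')
    rw [e1, e2]
    ring
  -- putting it together
  have hbound : ENNReal.ofReal (f z * d / 2) ≤ volume Q := by
    rw [hQ1, ← hIcc, MeasureTheory.ofReal_integral_eq_lintegral_ofReal hint hnn]
    exact le_trans (setLIntegral_mono' measurableSet_Icc hslice)
      (setLIntegral_le_lintegral _ _)
  have hfin : volume P ≠ ⊤ := hcomp.measure_lt_top.ne
  have := (ENNReal.ofReal_le_iff_le_toReal hfin).1 (by rw [hPQ]; exact hbound)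
  exact this
end

section
/- Let 0 < ε < 1/3, and let R ⊂ ℝᵈ be an axis-parallel hyperrectangle with rectangular aspect ratio at most 1/ε. Let w₁, ..., w_k be positive reals with Σᵢ wᵢ = (1-ε)·vol(R). Then there exist pairwise disjoint axis-parallel hyperrectangles R₁, ..., R_k, each contained in R, such that vol(Rᵢ) = wᵢ and the rectangular aspect ratio of each Rᵢ is at most 1/ε. -/
set_option maxHeartbeats 1000000



/-- An axis-parallel hyperrectangle in `ℝ^d`, given by its lower and upper corners. -/
structure Box (d : ℕ) where
  lo : Fin d → ℝ
  hi : Fin d → ℝ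
  lo_lt_hi : ∀ i, lo i < hi i

namespace Box

variable {d : ℕ}

/-- The side length of a box in direction `i`. -/
def side (B : Box d) (i : Fin d) : ℝ := B.hi i - B.lo i

/-- The volume of a box. -/
def vol (B : Box d) : ℝ := ∏ i, B.side i

/-- The box as a subset of `ℝ^d`. -/
def toSet (B : Box d) : Set (Fin d → ℝ) :=
  Set.univ.pi fun i => Set.Icc (B.lo i) (B.hi i)

/-- The (open) interior of a box. -/
def interiorSet (B : Box d) : Set (Fin d → ℝ) :=
  Set.univ.pi fun i => Set.Ioo (B.lo i) (B.hi i)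

/-- The rectangular aspect ratio of a box: longest side over shortest side. -/
noncomputable def ratio (B : Box d) : ℝ := (⨆ i, B.side i) / (⨅ i, B.side i)

lemma side_pos (B : Box d) (i : Fin d) : 0 < B.side i := sub_pos.mpr (B.lo_lt_hi i)

lemma vol_pos (B : Box d) : 0 < B.vol := Finset.prod_pos fun i _ => B.side_pos i

lemma mem_toSet {B : Box d} {x : Fin d → ℝ} :
    x ∈ B.toSet ↔ ∀ i, B.lo i ≤ x i ∧ x i ≤ B.hi i := by
  unfold toSet
  rw [Set.mem_univ_pi]
  simp [Set.mem_Icc]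

lemma mem_interiorSet {B : Box d} {x : Fin d → ℝ} :
    x ∈ B.interiorSet ↔ ∀ i, B.lo i < x i ∧ x i < B.hi i := by
  unfold interiorSet
  rw [Set.mem_univ_pi]
  simp [Set.mem_Ioo]

lemma toSet_subset {A B : Box d} (h1 : ∀ i, B.lo i ≤ A.lo i) (h2 : ∀ i, A.hi i ≤ B.hi i) :
    A.toSet ⊆ B.toSet := by
  intro x hx
  rw [mem_toSet] at hx ⊢
  exact fun i => ⟨(h1 i).trans (hx i).1, (hx i).2.trans (h2 i)⟩

lemma hi_mem_toSet (B : Box d) : B.hi ∈ B.toSet :=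
  mem_toSet.mpr fun i => ⟨(B.lo_lt_hi i).le, le_refl _⟩

lemma lo_mem_toSet (B : Box d) : B.lo ∈ B.toSet :=
  mem_toSet.mpr fun i => ⟨le_refl _, (B.lo_lt_hi i).le⟩

def Good (ε : ℝ) (B : Box d) : Prop := ∀ i j, ε * B.side i ≤ B.side j

lemma ratio_le_iff (hd : 0 < d) (B : Box d) {c : ℝ} (hc : 0 < c) :
    B.ratio ≤ c ↔ ∀ i j, B.side i ≤ c * B.side j := by
  haveI : Nonempty (Fin d) := ⟨⟨0, hd⟩⟩
  obtain ⟨M, hM⟩ := Finite.exists_max B.side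
  obtain ⟨m, hm⟩ := Finite.exists_min B.side
  have hsup : (⨆ i, B.side i) = B.side M :=
    le_antisymm (ciSup_le hM) (le_ciSup (Set.Finite.bddAbove (Set.finite_range _)) M)
  have hinf : (⨅ i, B.side i) = B.side m :=
    le_antisymm (ciInf_le (Set.Finite.bddBelow (Set.finite_range _)) m) (le_ciInf hm)
  rw [ratio, hsup, hinf, div_le_iff₀ (B.side_pos m)]
  constructor
  · intro h i j
    calc B.side i ≤ B.side M := hM i
      _ ≤ c * B.side m := by linarith
      _ ≤ c * B.side j := by nlinarith [hm j]
  · intro h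
    have := h M m
    linarith

lemma good_iff_ratio (hd : 0 < d) {ε : ℝ} (hε : 0 < ε) (B : Box d) :
    Good ε B ↔ B.ratio ≤ 1/ε := by
  rw [ratio_le_iff hd B (by positivity)]
  constructor
  · intro h i j
    have h' := h i j
    calc B.side i = (1/ε) * (ε * B.side i) := by field_simp
      _ ≤ (1/ε) * B.side j := by
          apply mul_le_mul_of_nonneg_left h' (by positivity)
  · intro h i j
    have h' := h i j
    have := mul_le_mul_of_nonneg_left h' hε.le
    calc ε * B.side i ≤ ε * (1/ε * B.side j) := this
      _ = B.side j := by field_simp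

def scaled (R : Box d) (l : ℝ) (hl : 0 < l) : Box d where
  lo := R.lo
  hi := fun i => R.lo i + l * R.side i
  lo_lt_hi := fun i => by
    show R.lo i < R.lo i + l * R.side i
    nlinarith [R.side_pos i]

lemma scaled_side (R : Box d) (l : ℝ) (hl : 0 < l) (i : Fin d) :
    (R.scaled l hl).side i = l * R.side i := by
  simp [scaled, side]

lemma scaled_vol (R : Box d) (l : ℝ) (hl : 0 < l) :
    (R.scaled l hl).vol = l ^ d * R.vol := by
  unfold vol
  rw [Finset.prod_congr rfl fun i _ => scaled_side R l hl i, Finset.prod_mul_distrib,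
    Finset.prod_const, Finset.card_univ, Fintype.card_fin]

lemma scaled_subset (R : Box d) (l : ℝ) (hl : 0 < l) (hl1 : l ≤ 1) :
    (R.scaled l hl).toSet ⊆ R.toSet := by
  refine toSet_subset (B := R) (fun i => le_of_eq rfl) ?_
  intro i
  have h1 := R.side_pos i
  have h2 : l * R.side i ≤ R.side i := by nlinarith
  have h3 : R.side i = R.hi i - R.lo i := rfl
  show R.lo i + l * R.side i ≤ R.hi i
  linarith

lemma scaled_good (R : Box d) (l : ℝ) (hl : 0 < l) {ε : ℝ} (hg : Good ε R) :
    Good ε (R.scaled l hl) := by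
  intro i j
  rw [scaled_side, scaled_side]
  have := hg i j
  nlinarith

def cutLo (R : Box d) (i0 : Fin d) (x : ℝ) (h1 : R.lo i0 < x) : Box d where
  lo := R.lo
  hi := Function.update R.hi i0 x
  lo_lt_hi := by
    intro i
    rcases eq_or_ne i i0 with h | h
    · subst h; simpa using h1
    · rw [Function.update_of_ne h]; exact R.lo_lt_hi i

def cutHi (R : Box d) (i0 : Fin d) (x : ℝ) (h2 : x < R.hi i0) : Box d where
  lo := Function.update R.lo i0 x
  hi := R.hi
  lo_lt_hi := by
    intro i
    rcases eq_or_ne i i0 with h | h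
    · subst h; simpa using h2
    · rw [Function.update_of_ne h]; exact R.lo_lt_hi i

lemma cutLo_side (R : Box d) (i0 : Fin d) (x : ℝ) (h1 : R.lo i0 < x) (i : Fin d) :
    (R.cutLo i0 x h1).side i = if i = i0 then x - R.lo i0 else R.side i := by
  rcases eq_or_ne i i0 with h | h
  · subst h; simp [cutLo, side]
  · simp [cutLo, side, Function.update_of_ne h, h]

lemma cutHi_side (R : Box d) (i0 : Fin d) (x : ℝ) (h2 : x < R.hi i0) (i : Fin d) :
    (R.cutHi i0 x h2).side i = if i = i0 then R.hi i0 - x else R.side i := by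
  rcases eq_or_ne i i0 with h | h
  · subst h; simp [cutHi, side]
  · simp [cutHi, side, Function.update_of_ne h, h]

lemma vol_eq_side_mul (R : Box d) (i0 : Fin d) :
    R.vol = R.side i0 * ∏ i ∈ Finset.univ.erase i0, R.side i := by
  rw [vol, ← Finset.mul_prod_erase Finset.univ _ (Finset.mem_univ i0)]

lemma cutLo_vol (R : Box d) (i0 : Fin d) (x : ℝ) (h1 : R.lo i0 < x) :
    (R.cutLo i0 x h1).vol = (x - R.lo i0) * ∏ i ∈ Finset.univ.erase i0, R.side i := by
  rw [vol_eq_side_mul _ i0, cutLo_side, if_pos rfl]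
  congr 1
  refine Finset.prod_congr rfl fun i hi => ?_
  rw [cutLo_side, if_neg (Finset.ne_of_mem_erase hi)]

lemma cutHi_vol (R : Box d) (i0 : Fin d) (x : ℝ) (h2 : x < R.hi i0) :
    (R.cutHi i0 x h2).vol = (R.hi i0 - x) * ∏ i ∈ Finset.univ.erase i0, R.side i := by
  rw [vol_eq_side_mul _ i0, cutHi_side, if_pos rfl]
  congr 1
  refine Finset.prod_congr rfl fun i hi => ?_
  rw [cutHi_side, if_neg (Finset.ne_of_mem_erase hi)]

lemma cutLo_subset (R : Box d) (i0 : Fin d) (x : ℝ) (h1 : R.lo i0 < x) (h2 : x < R.hi i0) :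
    (R.cutLo i0 x h1).toSet ⊆ R.toSet := by
  refine toSet_subset (B := R) (fun i => le_of_eq rfl) fun i => ?_
  rcases eq_or_ne i i0 with h | h
  · subst h; show Function.update R.hi i x i ≤ _; rw [Function.update_self]; exact h2.le
  · show Function.update R.hi i0 x i ≤ _; rw [Function.update_of_ne h]

lemma cutHi_subset (R : Box d) (i0 : Fin d) (x : ℝ) (h1 : R.lo i0 < x) (h2 : x < R.hi i0) :
    (R.cutHi i0 x h2).toSet ⊆ R.toSet := by
  refine toSet_subset (B := R) (fun i => ?_) fun i => le_of_eq rfl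
  rcases eq_or_ne i i0 with h | h
  · subst h; show _ ≤ Function.update R.lo i x i; rw [Function.update_self]; exact h1.le
  · show _ ≤ Function.update R.lo i0 x i; rw [Function.update_of_ne h]

lemma good_of_sides {ε : ℝ} (hε : 0 ≤ ε) (B : Box d) (i0 : Fin d) (M : ℝ)
    (hub : ∀ i, B.side i ≤ M) (hlb : ∀ i, ε * M ≤ B.side i) : Good ε B := by
  intro a b
  calc ε * B.side a ≤ ε * M := by nlinarith [hub a]
    _ ≤ B.side b := hlb b

lemma disjoint_of_cut (R : Box d) (i0 : Fin d) (x : ℝ) (h1 : R.lo i0 < x) (h2 : x < R.hi i0)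
    (A B : Box d) (hA : A.toSet ⊆ (R.cutLo i0 x h1).toSet)
    (hB : B.toSet ⊆ (R.cutHi i0 x h2).toSet) :
    Disjoint A.interiorSet B.interiorSet := by
  have hAhi : A.hi i0 ≤ x := by
    have := hA A.hi_mem_toSet
    rw [mem_toSet] at this
    have h := (this i0).2
    simpa [cutLo] using h
  have hBlo : x ≤ B.lo i0 := by
    have := hB B.lo_mem_toSet
    rw [mem_toSet] at this
    have h := (this i0).1
    simpa [cutHi] using h
  rw [Set.disjoint_left]
  intro z hzA hzB
  rw [mem_interiorSet] at hzA hzB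
  have h1' := (hzA i0).2
  have h2' := (hzB i0).1
  linarith

lemma exists_middle {ε : ℝ} (hε0 : 0 < ε) (hε1 : ε ≤ 1/3) {ι : Type} (s : Finset ι)
    (h2 : 2 ≤ s.card) (w : ι → ℝ) (hw : ∀ i ∈ s, 0 < w i)
    (hub : ∀ i ∈ s, w i ≤ (1 - ε) * ∑ i ∈ s, w i) :
    ∃ A : Finset ι, A ⊆ s ∧ A.Nonempty ∧ A ⊂ s ∧
      ε * ∑ i ∈ s, w i ≤ ∑ i ∈ A, w i ∧ ∑ i ∈ A, w i ≤ (1 - ε) * ∑ i ∈ s, w i := by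
  classical
  set W := ∑ i ∈ s, w i with hW
  have hsne : s.Nonempty := Finset.card_pos.mp (by omega)
  have hWpos : 0 < W := Finset.sum_pos hw hsne
  by_cases hx : ∃ i ∈ s, ε * W ≤ w i
  · obtain ⟨i, his, hi⟩ := hx
    obtain ⟨j, hjs, hji⟩ := Finset.exists_mem_ne (s := s) (by omega) i
    refine ⟨{i}, Finset.singleton_subset_iff.mpr his, Finset.singleton_nonempty i, ?_, ?_, ?_⟩
    · exact (Finset.ssubset_iff_of_subset (Finset.singleton_subset_iff.mpr his)).mpr
        ⟨j, hjs, by simp [hji]⟩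
    · simpa using hi
    · simpa using hub i his
  · push_neg at hx
    set T := s.powerset.filter (fun A => ε * W ≤ ∑ i ∈ A, w i) with hT
    have hsT : s ∈ T := by
      rw [hT, Finset.mem_filter, Finset.mem_powerset]
      exact ⟨le_refl _, by nlinarith⟩
    obtain ⟨A, hAT, hmin⟩ := Finset.exists_min_image T (fun A => ∑ i ∈ A, w i) ⟨s, hsT⟩
    rw [hT, Finset.mem_filter, Finset.mem_powerset] at hAT
    obtain ⟨hAs, hge⟩ := hAT
    have hAne : A.Nonempty := by
      rcases A.eq_empty_or_nonempty with h | h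
      · exfalso
        rw [h] at hge
        simp at hge
        nlinarith
      · exact h
    obtain ⟨haa, ha⟩ := hAne
    have hwa : 0 < w haa := hw haa (hAs ha)
    have hsump : ∑ i ∈ A.erase haa, w i + w haa = ∑ i ∈ A, w i := Finset.sum_erase_add A w ha
    have hereaseT : A.erase haa ∉ T := by
      intro hmem
      have := hmin _ hmem
      linarith
    have hlt : ∑ i ∈ A.erase haa, w i < ε * W := by
      by_contra hcon
      push_neg at hcon
      refine hereaseT ?_
      rw [hT, Finset.mem_filter, Finset.mem_powerset]
      exact ⟨(Finset.erase_subset haa A).trans hAs, hcon⟩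
    have hwalt : w haa < ε * W := hx haa (hAs ha)
    have hAub : ∑ i ∈ A, w i ≤ (1 - ε) * W := by nlinarith
    refine ⟨A, hAs, ⟨haa, ha⟩, ?_, hge, hAub⟩
    refine Finset.ssubset_iff_subset_ne.mpr ⟨hAs, ?_⟩
    rintro rfl
    rw [← hW] at hAub
    nlinarith

lemma aux {d : ℕ} (hd : 0 < d) {ε : ℝ} (hε0 : 0 < ε) (hε1 : ε < 1/3) :
    ∀ (n : ℕ) {ι : Type} (s : Finset ι), s.card = n → ∀ (R : Box d), Box.Good ε R →
      ∀ (w : ι → ℝ), (∀ i ∈ s, 0 < w i) → (∑ i ∈ s, w i) ≤ (1 - ε) * R.vol →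
      ∃ B : ι → Box d,
        (∀ i ∈ s, (B i).toSet ⊆ R.toSet) ∧
        (∀ i ∈ s, (B i).vol = w i) ∧
        (∀ i ∈ s, Box.Good ε (B i)) ∧
        (∀ i ∈ s, ∀ j ∈ s, i ≠ j → Disjoint (B i).interiorSet (B j).interiorSet) := by
  intro n
  induction n using Nat.strong_induction_on with
  | _ n IH =>
  intro ι s hcard R hR w hw hsum
  classical
  have h1ε : (0:ℝ) < 1 - ε := by linarith
  have hV : 0 < R.vol := R.vol_pos
  rcases s.eq_empty_or_nonempty with hse | hsne
  · subst hse
    exact ⟨fun _ => R, by simp, by simp, by simp, by simp⟩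
  have hn1 : 1 ≤ n := by
    rw [← hcard]
    exact Finset.card_pos.mpr hsne
  rcases eq_or_lt_of_le hn1 with hn | hn2
  · -- singleton case
    have hcard1 : s.card = 1 := by omega
    obtain ⟨j, rfl⟩ := Finset.card_eq_one.mp hcard1
    rw [Finset.sum_singleton] at hsum
    have hwj : 0 < w j := hw j (Finset.mem_singleton_self j)
    have hbase0 : 0 < w j / R.vol := by positivity
    have hbase1 : w j / R.vol ≤ 1 := by
      rw [div_le_one hV]
      nlinarith
    set l := (w j / R.vol) ^ ((d:ℝ)⁻¹) with hl
    have hl0 : 0 < l := Real.rpow_pos_of_pos hbase0 _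
    have hl1 : l ≤ 1 := Real.rpow_le_one hbase0.le hbase1 (by positivity)
    have hld : l ^ d = w j / R.vol := by
      rw [hl, ← Real.rpow_natCast (_ ^ _) d, ← Real.rpow_mul hbase0.le]
      rw [show ((d:ℝ)⁻¹ * d) = 1 by field_simp]
      exact Real.rpow_one _
    refine ⟨fun _ => R.scaled l hl0, ?_, ?_, ?_, ?_⟩
    · intro i _
      exact R.scaled_subset l hl0 hl1
    · intro i hi
      rw [Finset.mem_singleton] at hi
      subst hi
      rw [R.scaled_vol, hld]
      field_simp
    · intro i _
      exact R.scaled_good l hl0 hR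
    · intro i hi j' hj' hij
      rw [Finset.mem_singleton] at hi hj'
      exact absurd (hi.trans hj'.symm) hij
  · -- main case : n ≥ 2
    set W := ∑ i ∈ s, w i with hWdef
    have hWpos : 0 < W := Finset.sum_pos hw hsne
    have hbase0 : 0 < W / ((1 - ε) * R.vol) := by positivity
    have hbase1 : W / ((1 - ε) * R.vol) ≤ 1 := by
      rw [div_le_one (by positivity)]
      exact hsum
    set l := (W / ((1 - ε) * R.vol)) ^ ((d:ℝ)⁻¹) with hl
    have hl0 : 0 < l := Real.rpow_pos_of_pos hbase0 _
    have hl1 : l ≤ 1 := Real.rpow_le_one hbase0.le hbase1 (by positivity)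
    have hld : l ^ d = W / ((1 - ε) * R.vol) := by
      rw [hl, ← Real.rpow_natCast (_ ^ _) d, ← Real.rpow_mul hbase0.le]
      rw [show ((d:ℝ)⁻¹ * d) = 1 by field_simp]
      exact Real.rpow_one _
    set R0 := R.scaled l hl0 with hR0
    have hg0 : Box.Good ε R0 := R.scaled_good l hl0 hR
    have hsub0 : R0.toSet ⊆ R.toSet := R.scaled_subset l hl0 hl1
    have hvol0 : (1 - ε) * R0.vol = W := by
      rw [hR0, Box.scaled_vol, hld]
      field_simp
    have hV0 : 0 < R0.vol := R0.vol_pos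
    haveI : Nonempty (Fin d) := ⟨⟨0, hd⟩⟩
    obtain ⟨i0, hi0⟩ := Finite.exists_max R0.side
    set C := ∏ i ∈ Finset.univ.erase i0, R0.side i with hC
    have hCpos : 0 < C := Finset.prod_pos fun i _ => R0.side_pos i
    set s0 := R0.side i0 with hs0
    have hs0pos : 0 < s0 := R0.side_pos i0
    have hvolC : R0.vol = s0 * C := R0.vol_eq_side_mul i0
    have hlow : ∀ i, ε * s0 ≤ R0.side i := fun i => hg0 i0 i
    have hWeq : W = (1 - ε) * (s0 * C) := by rw [← hvol0, hvolC]
    have hside : s0 = R0.hi i0 - R0.lo i0 := rfl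
    clear_value s0 C R0 l W
    have key : ∀ t : ℝ, 0 < t → ε * s0 ≤ t → t ≤ (1 - ε) * s0 →
        ∃ P1 P2 : Box d, P1.vol = t * C ∧ P2.vol = (s0 - t) * C ∧
          Box.Good ε P1 ∧ Box.Good ε P2 ∧ P1.toSet ⊆ R0.toSet ∧ P2.toSet ⊆ R0.toSet ∧
          ∀ A B : Box d, A.toSet ⊆ P1.toSet → B.toSet ⊆ P2.toSet →
            Disjoint A.interiorSet B.interiorSet := by
      intro t ht0 htl hth
      have hts : t < s0 := by nlinarith
      have h1 : R0.lo i0 < R0.lo i0 + t := by linarith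
      have h2 : R0.lo i0 + t < R0.hi i0 := by linarith
      refine ⟨R0.cutLo i0 _ h1, R0.cutHi i0 _ h2, ?_, ?_, ?_, ?_,
        R0.cutLo_subset i0 _ h1 h2, R0.cutHi_subset i0 _ h1 h2,
        fun A B hA hB => R0.disjoint_of_cut i0 _ h1 h2 A B hA hB⟩
      · rw [R0.cutLo_vol, ← hC]
        ring
      · rw [R0.cutHi_vol, ← hC, hside]
        ring
      · refine Box.good_of_sides hε0.le _ i0 s0 (fun i => ?_) (fun i => ?_)
        · rw [R0.cutLo_side]
          split
          · linarith
          · exact hi0 i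
        · rw [R0.cutLo_side]
          split
          · linarith
          · exact hlow i
      · refine Box.good_of_sides hε0.le _ i0 s0 (fun i => ?_) (fun i => ?_)
        · rw [R0.cutHi_side]
          split
          · linarith
          · exact hi0 i
        · rw [R0.cutHi_side]
          split
          · nlinarith
          · exact hlow i
    clear hl hld hbase0 hbase1 hside hC hvolC hi0 hlow hg0 hs0 hR0 hvol0 hV0 hl0 hl1 hsum hV hR
    by_cases hbig : ∃ j ∈ s, (1 - ε) * W < w j
    · -- big weight case
      obtain ⟨j, hjs, hwjbig⟩ := hbig
      have hwjpos : 0 < w j := hw j hjs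
      have hwjW : w j ≤ W := by
        rw [hWdef]
        exact Finset.single_le_sum (fun i hi => (hw i hi).le) hjs
      set t := w j / C with htdef
      have ht0 : 0 < t := by positivity
      have htC : t * C = w j := by
        rw [htdef]
        field_simp
      have htle : t ≤ (1 - ε) * s0 := by
        rw [htdef, div_le_iff₀ hCpos]
        nlinarith [hWeq]
      have heps : ε ≤ (1 - ε)^2 := by nlinarith
      have htge : ε * s0 ≤ t := by
        rw [htdef, le_div_iff₀ hCpos]
        have h2 : (1 - ε) * ((1 - ε) * (s0 * C)) < w j := by
          rw [← hWeq]
          exact hwjbig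
        nlinarith [mul_le_mul_of_nonneg_right heps (mul_nonneg hs0pos.le hCpos.le)]
      obtain ⟨P1, P2, hP1v, hP2v, hP1g, hP2g, hP1s, hP2s, hdisj⟩ := key t ht0 htge htle
      have hP1vol : P1.vol = w j := by rw [hP1v, htC]
      have hcardlt : (s.erase j).card < n := by
        rw [Finset.card_erase_of_mem hjs, hcard]
        omega
      have hsump : ∑ i ∈ s.erase j, w i + w j = W := by
        rw [hWdef]
        exact Finset.sum_erase_add s w hjs
      have hrec : ∑ i ∈ s.erase j, w i ≤ (1 - ε) * P2.vol := by
        rw [hP2v]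
        have hexp : (1 - ε) * ((s0 - t) * C) = W - (1 - ε) * w j := by
          calc (1 - ε) * ((s0 - t) * C) = (1 - ε) * (s0 * C) - (1 - ε) * (t * C) := by ring
            _ = W - (1 - ε) * w j := by rw [← hWeq, htC]
        rw [hexp]
        nlinarith
      obtain ⟨B2, hB2sub, hB2vol, hB2good, hB2disj⟩ := IH _ hcardlt (s.erase j) rfl P2 hP2g w
        (fun i hi => hw i (Finset.mem_of_mem_erase hi)) hrec
      refine ⟨Function.update B2 j P1, ?_, ?_, ?_, ?_⟩
      · intro i his
        rcases eq_or_ne i j with h | h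
        · subst h
          rw [Function.update_self]
          exact hP1s.trans hsub0
        · rw [Function.update_of_ne h]
          exact ((hB2sub i (Finset.mem_erase.mpr ⟨h, his⟩)).trans hP2s).trans hsub0
      · intro i his
        rcases eq_or_ne i j with h | h
        · subst h
          rw [Function.update_self]
          exact hP1vol
        · rw [Function.update_of_ne h]
          exact hB2vol i (Finset.mem_erase.mpr ⟨h, his⟩)
      · intro i his
        rcases eq_or_ne i j with h | h
        · subst h
          rw [Function.update_self]
          exact hP1g
        · rw [Function.update_of_ne h]
          exact hB2good i (Finset.mem_erase.mpr ⟨h, his⟩)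
      · intro i his j' hj's hij
        rcases eq_or_ne i j with h | h <;> rcases eq_or_ne j' j with h' | h'
        · exact absurd (h.trans h'.symm) hij
        · subst h
          rw [Function.update_self, Function.update_of_ne h']
          exact hdisj P1 (B2 j') (le_refl _) (hB2sub j' (Finset.mem_erase.mpr ⟨h', hj's⟩))
        · subst h'
          rw [Function.update_self, Function.update_of_ne h]
          exact (hdisj P1 (B2 i) (le_refl _) (hB2sub i (Finset.mem_erase.mpr ⟨h, his⟩))).symm
        · rw [Function.update_of_ne h, Function.update_of_ne h']
          exact hB2disj i (Finset.mem_erase.mpr ⟨h, his⟩) j' (Finset.mem_erase.mpr ⟨h', hj's⟩) hij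
    · -- medium case
      push_neg at hbig
      have h2card : 2 ≤ s.card := by omega
      obtain ⟨A, hAs, hAne, hAss, ha1, ha2⟩ :=
        exists_middle hε0 (le_of_lt hε1) s h2card w hw (by rw [← hWdef]; exact hbig)
      rw [← hWdef] at ha1 ha2
      set a := ∑ i ∈ A, w i with hadef
      have hapos : 0 < a := Finset.sum_pos (fun i hi => hw i (hAs hi)) hAne
      set t := a / ((1 - ε) * C) with htdef
      have ht0 : 0 < t := by positivity
      have htC : t * C = a / (1 - ε) := by
        rw [htdef]
        field_simp
      clear_value a t
      have htge : ε * s0 ≤ t := by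
        rw [htdef, le_div_iff₀ (by positivity)]
        have ha1' : ε * ((1 - ε) * (s0 * C)) ≤ a := by rw [← hWeq]; exact ha1
        nlinarith
      have htle : t ≤ (1 - ε) * s0 := by
        rw [htdef, div_le_iff₀ (by positivity)]
        have ha2' : a ≤ (1 - ε) * ((1 - ε) * (s0 * C)) := by rw [← hWeq]; exact ha2
        nlinarith
      obtain ⟨P1, P2, hP1v, hP2v, hP1g, hP2g, hP1s, hP2s, hdisj⟩ := key t ht0 htge htle
      have hP1vol : (1 - ε) * P1.vol = a := by
        rw [hP1v, htC]
        field_simp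
      have hP2vol : (1 - ε) * P2.vol = W - a := by
        rw [hP2v]
        calc (1 - ε) * ((s0 - t) * C) = (1 - ε) * (s0 * C) - (1 - ε) * (t * C) := by ring
          _ = W - (1 - ε) * (a / (1 - ε)) := by rw [← hWeq, htC]
          _ = W - a := by field_simp
      have hcardA : A.card < n := by
        rw [← hcard]
        exact Finset.card_lt_card hAss
      have hcardB : (s \ A).card < n := by
        have h1 : A.card ≤ s.card := Finset.card_le_card hAs
        have h2 : 0 < A.card := Finset.card_pos.mpr hAne
        rw [Finset.card_sdiff_of_subset hAs]
        omega
      have hsdiff : ∑ i ∈ s \ A, w i + ∑ i ∈ A, w i = W := by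
        rw [hWdef]
        exact Finset.sum_sdiff hAs
      obtain ⟨B1, hB1sub, hB1vol, hB1good, hB1disj⟩ := IH _ hcardA A rfl P1 hP1g w
        (fun i hi => hw i (hAs hi)) (by rw [← hadef]; exact le_of_eq hP1vol.symm)
      obtain ⟨B2, hB2sub, hB2vol, hB2good, hB2disj⟩ := IH _ hcardB (s \ A) rfl P2 hP2g w
        (fun i hi => hw i (Finset.mem_sdiff.mp hi).1) (by rw [← hadef] at hsdiff; linarith)
      refine ⟨fun i => if i ∈ A then B1 i else B2 i, ?_, ?_, ?_, ?_⟩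
      · intro i his
        by_cases hiA : i ∈ A
        · simp only [if_pos hiA]
          exact ((hB1sub i hiA).trans hP1s).trans hsub0
        · simp only [if_neg hiA]
          exact ((hB2sub i (Finset.mem_sdiff.mpr ⟨his, hiA⟩)).trans hP2s).trans hsub0
      · intro i his
        by_cases hiA : i ∈ A
        · simp only [if_pos hiA]
          exact hB1vol i hiA
        · simp only [if_neg hiA]
          exact hB2vol i (Finset.mem_sdiff.mpr ⟨his, hiA⟩)
      · intro i his
        by_cases hiA : i ∈ A
        · simp only [if_pos hiA]
          exact hB1good i hiA
        · simp only [if_neg hiA]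
          exact hB2good i (Finset.mem_sdiff.mpr ⟨his, hiA⟩)
      · intro i his j' hj's hij
        by_cases hiA : i ∈ A <;> by_cases hjA : j' ∈ A
        · simp only [if_pos hiA, if_pos hjA]
          exact hB1disj i hiA j' hjA hij
        · simp only [if_pos hiA, if_neg hjA]
          exact hdisj (B1 i) (B2 j') (hB1sub i hiA)
            (hB2sub j' (Finset.mem_sdiff.mpr ⟨hj's, hjA⟩))
        · simp only [if_neg hiA, if_pos hjA]
          exact (hdisj (B1 j') (B2 i) (hB1sub j' hjA)
            (hB2sub i (Finset.mem_sdiff.mpr ⟨his, hiA⟩))).symm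
        · simp only [if_neg hiA, if_neg hjA]
          exact hB2disj i (Finset.mem_sdiff.mpr ⟨his, hiA⟩) j'
            (Finset.mem_sdiff.mpr ⟨hj's, hjA⟩) hij

end Box

/-- Slack-cut lemma: let `0 < ε < 1/3`, and let `R ⊂ ℝ^d` be a hyperrectangle with
rectangular aspect ratio at most `1/ε`. Let `w₁, …, w_k` be positive reals summing to
`(1-ε)·vol(R)`. Then there exist hyperrectangles `R₁, …, R_k` with pairwise disjoint
interiors, each contained in `R`, with `vol(Rᵢ) = wᵢ` and rectangular aspect ratio
at most `1/ε`. -/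
theorem stmt11 (d : ℕ) (hd : 0 < d) (ε : ℝ) (hε0 : 0 < ε) (hε1 : ε < 1/3)
    (R : Box d) (hR : R.ratio ≤ 1/ε)
    (k : ℕ) (hk : 0 < k) (w : Fin k → ℝ) (hw : ∀ i, 0 < w i)
    (hsum : ∑ i, w i = (1 - ε) * R.vol) :
    ∃ B : Fin k → Box d,
      (∀ i, (B i).toSet ⊆ R.toSet) ∧
      (∀ i, (B i).vol = w i) ∧
      (∀ i, (B i).ratio ≤ 1/ε) ∧
      (∀ i j, i ≠ j → Disjoint ((B i).interiorSet) ((B j).interiorSet)) := by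
  classical
  have hGood : Box.Good ε R := (Box.good_iff_ratio hd hε0 R).mpr hR
  obtain ⟨B, h1, h2, h3, h4⟩ := Box.aux hd hε0 hε1 k Finset.univ (by simp) R hGood w
    (fun i _ => hw i) (le_of_eq hsum)
  exact ⟨B, fun i => h1 i (Finset.mem_univ i), fun i => h2 i (Finset.mem_univ i),
    fun i => (Box.good_iff_ratio hd hε0 _).mp (h3 i (Finset.mem_univ i)),
    fun i j hij => h4 i (Finset.mem_univ i) j (Finset.mem_univ j) hij⟩
end
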